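/- arXiv:math/0606525 — 3 statements merged into one kernel-verified Lean document; each statement's English description precedes it below -/
import Mathlib

section
/- Let m ≥ 1 and M ∈ ℕ, let c₀, …, c_m : ℂ → ℂ be polynomial functions of ε with c_m(ε) = ε^M · a_m for a nonzero constant a_m ∈ ℂ, and for ε > 0 set P_ε(X) = Σ_{j=0}^m c_j(ε) X^j, a polynomial of degree m in X. Then: (i) there exist ε₀ > 0 and continuous functions ξ₁, …, ξ_m : (0, ε₀) → ℂ such that for every ε ∈ (0, ε₀) one has the factorization P_ε(X) = ε^M a_m ∏_{i=1}^m (X − ξ_i(ε)); (ii) there exists p ∈ ℕ, p ≥ 1, such that for each i = 1, …, m the function ε ↦ ξ_i(ε^p), defined for small ε > 0, extends to a function that is meromorphic at 0, i.e. holomorphic on a punctured disc around 0 in ℂ with at worst a pole at 0. -/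
/-- A function `F : ℂ → ℂ` is meromorphic at `0` if it is holomorphic on some punctured disc
`{0 < |z| < ρ}` and `z^k F(z)` extends holomorphically across `0` for some `k ∈ ℕ`. -/
def MeromorphicAtZero (F : ℂ → ℂ) : Prop :=
  ∃ ρ > (0 : ℝ), (∀ z : ℂ, z ≠ 0 → ‖z‖ < ρ → DifferentiableAt ℂ F z) ∧
    ∃ k : ℕ, ∃ G : ℂ → ℂ, (∀ z : ℂ, ‖z‖ < ρ → DifferentiableAt ℂ G z) ∧
      ∀ z : ℂ, z ≠ 0 → ‖z‖ < ρ → G z = z ^ k * F z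


open Polynomial Filter

noncomputable def npoly (d : ℕ) (f : ℕ → ℂ) : Polynomial ℂ :=
  X ^ d + ∑ i ∈ Finset.range d, C (f i) * X ^ i

lemma npoly_degree_lt (d : ℕ) (f : ℕ → ℂ) :
    (∑ i ∈ Finset.range d, C (f i) * X ^ i).degree < (d : WithBot ℕ) := by
  apply lt_of_le_of_lt (Polynomial.degree_sum_le _ _)
  rw [Finset.sup_lt_iff (by exact_mod_cast WithBot.bot_lt_coe d)]
  intro i hi
  apply lt_of_le_of_lt (Polynomial.degree_C_mul_X_pow_le _ _)
  exact_mod_cast Finset.mem_range.mp hi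

lemma npoly_monic (d : ℕ) (f : ℕ → ℂ) : (npoly d f).Monic := by
  apply Polynomial.monic_X_pow_add
  exact npoly_degree_lt d f

lemma npoly_natDegree (d : ℕ) (f : ℕ → ℂ) : (npoly d f).natDegree = d := by
  have h : (npoly d f).degree = d := by
    unfold npoly
    rw [add_comm]
    rw [Polynomial.degree_add_eq_right_of_degree_lt]
    · exact Polynomial.degree_X_pow d
    · rw [Polynomial.degree_X_pow]; exact npoly_degree_lt d f
  exact Polynomial.natDegree_eq_of_degree_eq_some h

lemma npoly_coeff (d : ℕ) (f : ℕ → ℂ) (k : ℕ) :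
    (npoly d f).coeff k = if k < d then f k else if k = d then 1 else 0 := by
  unfold npoly
  rw [Polynomial.coeff_add, Polynomial.coeff_X_pow, Polynomial.finset_sum_coeff]
  simp only [Polynomial.coeff_C_mul, Polynomial.coeff_X_pow]
  rcases lt_trichotomy k d with h | h | h
  · rw [Finset.sum_eq_single k]
    · simp [h, Nat.ne_of_lt h]
    · intro b _ hb; simp [Ne.symm hb]
    · intro hk; exact absurd (Finset.mem_range.mpr h) hk
  · subst h
    rw [Finset.sum_eq_zero]
    · simp
    · intro b hb
      have : k ≠ b := Ne.symm (Nat.ne_of_lt (Finset.mem_range.mp hb))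
      simp [this]
  · rw [Finset.sum_eq_zero]
    · simp [Nat.ne_of_gt h, not_lt.mpr (le_of_lt h)]
    · intro b hb
      have : k ≠ b := Ne.symm (Nat.ne_of_lt (lt_trans (Finset.mem_range.mp hb) h))
      simp [this]

lemma eval_monic_aux {p : Polynomial ℂ} {n : ℕ} (hm : p.Monic) (hd : p.natDegree = n) (W : ℂ) :
    p.eval W = W ^ n + ∑ k ∈ Finset.range n, p.coeff k * W ^ k := by
  rw [Polynomial.eval_eq_sum_range, hd, Finset.sum_range_succ]
  rw [show p.coeff n = 1 from hd ▸ hm.coeff_natDegree]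
  ring

lemma npoly_eval (d : ℕ) (f : ℕ → ℂ) (W : ℂ) :
    (npoly d f).eval W = W ^ d + ∑ k ∈ Finset.range d, f k * W ^ k := by
  rw [eval_monic_aux (npoly_monic d f) (npoly_natDegree d f)]
  congr 1
  apply Finset.sum_congr rfl
  intro k hk
  rw [npoly_coeff]
  simp [Finset.mem_range.mp hk]

section AIFT

variable {E F : Type*} [NormedAddCommGroup E] [NormedSpace ℂ E] [CompleteSpace E]
  [NormedAddCommGroup F] [NormedSpace ℂ F] [CompleteSpace F]

set_option linter.unusedSectionVars false in
/-- Analytic inverse function theorem, packaged. -/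
theorem analytic_local_inverse {f : E → F} {x₀ : E} (hf : AnalyticAt ℂ f x₀)
    (i : E ≃L[ℂ] F) (hi : HasFDerivAt f (i : E →L[ℂ] F) x₀) :
    ∃ g : F → E, AnalyticAt ℂ g (f x₀) ∧ g (f x₀) = x₀ ∧
      ∀ᶠ y in nhds (f x₀), f (g y) = y := by
  have hstrict : HasStrictFDerivAt f (i : E →L[ℂ] F) x₀ := by
    have h1 := hf.hasStrictFDerivAt
    have h2 : fderiv ℂ f x₀ = (i : E →L[ℂ] F) := hi.fderiv
    rwa [h2] at h1
  set φ := hstrict.toOpenPartialHomeomorph f with hφ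
  have hcoe : (φ : E → F) = f := hstrict.toOpenPartialHomeomorph_coe
  have hx₀ : x₀ ∈ φ.source := hstrict.mem_toOpenPartialHomeomorph_source
  obtain ⟨p, hp⟩ := hf
  have hp1 : p 1 = (continuousMultilinearCurryFin1 ℂ E F).symm (i : E →L[ℂ] F) := by
    have hd := hp.hasFDerivAt
    have : continuousMultilinearCurryFin1 ℂ E F (p 1) = (i : E →L[ℂ] F) :=
      hd.unique hi
    rw [← this]; simp
  have hpφ : HasFPowerSeriesAt (φ : E → F) p x₀ := by rwa [hcoe]
  have hsymm := φ.hasFPowerSeriesAt_symm hx₀ hpφ hp1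
  have hφx : (φ : E → F) x₀ = f x₀ := by rw [hcoe]
  refine ⟨φ.symm, ?_, ?_, ?_⟩
  · rw [← hφx]; exact ⟨_, hsymm⟩
  · rw [← hφx]; exact φ.left_inv hx₀
  · have hmem : f x₀ ∈ φ.target := by rw [← hφx]; exact φ.map_source hx₀
    filter_upwards [φ.open_target.mem_nhds hmem] with y hy
    rw [← hcoe]; exact φ.right_inv hy

/-- Solve `f (u s) = c s` analytically in a parameter. -/
theorem analytic_param_solve {f : E → F} {x₀ : E} (hf : AnalyticAt ℂ f x₀)
    (i : E ≃L[ℂ] F) (hi : HasFDerivAt f (i : E →L[ℂ] F) x₀)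
    {c : ℂ → F} (hc : AnalyticAt ℂ c 0) (hc0 : c 0 = f x₀) :
    ∃ u : ℂ → E, AnalyticAt ℂ u 0 ∧ u 0 = x₀ ∧ ∀ᶠ s in nhds (0 : ℂ), f (u s) = c s := by
  obtain ⟨g, hg, hg0, hfg⟩ := analytic_local_inverse hf i hi
  refine ⟨g ∘ c, ?_, by simp [hc0, hg0], ?_⟩
  · exact (hc0 ▸ hg).comp hc
  · have hcont : Filter.Tendsto c (nhds 0) (nhds (f x₀)) := by
      rw [← hc0]; exact hc.continuousAt
    filter_upwards [hcont.eventually hfg] with s hs using hs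

end AIFT
section Hensel

open Finset

def padL (d : ℕ) (u : Fin d → ℂ) : ℕ → ℂ := fun i => if h : i < d then u ⟨i, h⟩ else 0

def padC (d : ℕ) : ℕ → ℂ := fun i => if i = d then 1 else 0

def pad (d : ℕ) (u : Fin d → ℂ) : ℕ → ℂ := fun i => padL d u i + padC d i

noncomputable def uPoly (d : ℕ) (u : Fin d → ℂ) : Polynomial ℂ := npoly d (padL d u)

lemma uPoly_coeff (d : ℕ) (u : Fin d → ℂ) (k : ℕ) : (uPoly d u).coeff k = pad d u k := by
  rw [uPoly, npoly_coeff]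
  unfold pad padL padC
  rcases lt_trichotomy k d with h | h | h
  · simp [h, Nat.ne_of_lt h]
  · subst h; simp
  · simp [not_lt.mpr (le_of_lt h), Nat.ne_of_gt h]

lemma uPoly_monic (d : ℕ) (u : Fin d → ℂ) : (uPoly d u).Monic := npoly_monic _ _

lemma uPoly_natDegree (d : ℕ) (u : Fin d → ℂ) : (uPoly d u).natDegree = d :=
  npoly_natDegree _ _

noncomputable def linp (d : ℕ) (f : ℕ → ℂ) : Polynomial ℂ :=
  ∑ i ∈ Finset.range d, Polynomial.C (f i) * Polynomial.X ^ i

lemma linp_coeff (d : ℕ) (f : ℕ → ℂ) (k : ℕ) :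
    (linp d f).coeff k = if k < d then f k else 0 := by
  unfold linp
  rw [Polynomial.finset_sum_coeff]
  simp only [Polynomial.coeff_C_mul, Polynomial.coeff_X_pow]
  by_cases h : k < d
  · rw [Finset.sum_eq_single k]
    · simp [h]
    · intro b _ hb; simp [Ne.symm hb]
    · intro hk; exact absurd (Finset.mem_range.mpr h) hk
  · rw [Finset.sum_eq_zero, if_neg h]
    intro b hb
    have : k ≠ b := fun hkb => h (hkb ▸ Finset.mem_range.mp hb)
    simp [this]

lemma linp_coeff_padL (d : ℕ) (u : Fin d → ℂ) (k : ℕ) :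
    (linp d (padL d u)).coeff k = padL d u k := by
  rw [linp_coeff]
  by_cases h : k < d
  · rw [if_pos h]
  · rw [if_neg h]; unfold padL; rw [dif_neg h]

lemma linp_degree_lt (d : ℕ) (f : ℕ → ℂ) : (linp d f).degree < (d : WithBot ℕ) :=
  npoly_degree_lt d f

lemma linp_natDegree_lt (d : ℕ) (hd : 1 ≤ d) (f : ℕ → ℂ) : (linp d f).natDegree < d := by
  by_cases h : linp d f = 0
  · rw [h, Polynomial.natDegree_zero]; omega
  · exact (Polynomial.natDegree_lt_iff_degree_lt h).mpr (linp_degree_lt d f)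

lemma uPoly_mul_coeff (d₁ d₂ : ℕ) (u : Fin d₁ → ℂ) (v : Fin d₂ → ℂ) (k : ℕ) :
    (uPoly d₁ u * uPoly d₂ v).coeff k
      = ∑ i ∈ Finset.range (k + 1), pad d₁ u i * pad d₂ v (k - i) := by
  rw [Polynomial.coeff_mul, Finset.Nat.sum_antidiagonal_eq_sum_range_succ_mk]
  exact Finset.sum_congr rfl fun i _ => by rw [uPoly_coeff, uPoly_coeff]

noncomputable def henselPhi (d₁ d₂ : ℕ) (x : (Fin d₁ → ℂ) × (Fin d₂ → ℂ)) :
    Fin (d₁ + d₂) → ℂ :=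
  fun k => ∑ i ∈ Finset.range ((k : ℕ) + 1), pad d₁ x.1 i * pad d₂ x.2 ((k : ℕ) - i)

lemma henselPhi_eq_coeff (d₁ d₂ : ℕ) (x : (Fin d₁ → ℂ) × (Fin d₂ → ℂ)) (k : Fin (d₁ + d₂)) :
    henselPhi d₁ d₂ x k = (uPoly d₁ x.1 * uPoly d₂ x.2).coeff k := by
  rw [henselPhi, uPoly_mul_coeff]

noncomputable def henselT (d₁ d₂ : ℕ) (x₀ a : (Fin d₁ → ℂ) × (Fin d₂ → ℂ)) : Fin (d₁ + d₂) → ℂ :=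
  fun k => ∑ i ∈ Finset.range ((k : ℕ) + 1),
    (padL d₁ a.1 i * pad d₂ x₀.2 ((k : ℕ) - i) + pad d₁ x₀.1 i * padL d₂ a.2 ((k : ℕ) - i))

lemma padL_add (d : ℕ) (u v : Fin d → ℂ) (i : ℕ) :
    padL d (u + v) i = padL d u i + padL d v i := by
  unfold padL; split_ifs <;> simp

lemma padL_smul (d : ℕ) (c : ℂ) (u : Fin d → ℂ) (i : ℕ) :
    padL d (c • u) i = c * padL d u i := by
  unfold padL; split_ifs <;> simp

lemma pad_add_padL (d : ℕ) (u v : Fin d → ℂ) (i : ℕ) :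
    pad d (u + v) i = pad d u i + padL d v i := by
  unfold pad; rw [padL_add]; ring

noncomputable def henselTL (d₁ d₂ : ℕ) (x₀ : (Fin d₁ → ℂ) × (Fin d₂ → ℂ)) :
    ((Fin d₁ → ℂ) × (Fin d₂ → ℂ)) →ₗ[ℂ] (Fin (d₁ + d₂) → ℂ) where
  toFun := henselT d₁ d₂ x₀
  map_add' := by
    intro a b
    funext k
    simp only [henselT, Pi.add_apply, Prod.fst_add, Prod.snd_add, padL_add, add_mul, mul_add]
    rw [← Finset.sum_add_distrib]
    exact Finset.sum_congr rfl fun i _ => by ring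
  map_smul' := by
    intro c a
    funext k
    simp only [henselT, Pi.smul_apply, Prod.smul_fst, Prod.smul_snd, padL_smul,
      RingHom.id_apply, smul_eq_mul]
    rw [Finset.mul_sum]
    exact Finset.sum_congr rfl fun i _ => by ring

lemma hensel_quad (d₁ d₂ : ℕ) (x₀ a : (Fin d₁ → ℂ) × (Fin d₂ → ℂ)) (k : Fin (d₁ + d₂)) :
    henselPhi d₁ d₂ (x₀ + a) k = henselPhi d₁ d₂ x₀ k + henselT d₁ d₂ x₀ a k +
      ∑ i ∈ Finset.range ((k : ℕ) + 1), padL d₁ a.1 i * padL d₂ a.2 ((k : ℕ) - i) := by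
  simp only [henselPhi, henselT, Prod.fst_add, Prod.snd_add, pad_add_padL]
  rw [← Finset.sum_add_distrib, ← Finset.sum_add_distrib]
  exact Finset.sum_congr rfl fun i _ => by ring

lemma padL_norm_le (d : ℕ) (u : Fin d → ℂ) (i : ℕ) : ‖padL d u i‖ ≤ ‖u‖ := by
  unfold padL
  split_ifs with h
  · exact norm_le_pi_norm u ⟨i, h⟩
  · simp

lemma hensel_hasFDerivAt (d₁ d₂ : ℕ) (x₀ : (Fin d₁ → ℂ) × (Fin d₂ → ℂ)) :
    HasFDerivAt (henselPhi d₁ d₂)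
      (LinearMap.toContinuousLinearMap (henselTL d₁ d₂ x₀)) x₀ := by
  rw [hasFDerivAt_iff_isLittleO_nhds_zero]
  set m := d₁ + d₂
  have key : ∀ a : (Fin d₁ → ℂ) × (Fin d₂ → ℂ),
      henselPhi d₁ d₂ (x₀ + a) - henselPhi d₁ d₂ x₀
        - LinearMap.toContinuousLinearMap (henselTL d₁ d₂ x₀) a
      = fun k : Fin m => ∑ i ∈ Finset.range ((k : ℕ) + 1),
          padL d₁ a.1 i * padL d₂ a.2 ((k : ℕ) - i) := by
    intro a
    funext k
    simp only [Pi.sub_apply, LinearMap.coe_toContinuousLinearMap']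
    have := hensel_quad d₁ d₂ x₀ a k
    rw [this]
    show _ + _ + _ - _ - henselT d₁ d₂ x₀ a k = _
    ring
  have bound : ∀ a : (Fin d₁ → ℂ) × (Fin d₂ → ℂ),
      ‖(fun k : Fin m => ∑ i ∈ Finset.range ((k : ℕ) + 1),
          padL d₁ a.1 i * padL d₂ a.2 ((k : ℕ) - i) : Fin m → ℂ)‖
        ≤ (m : ℝ) * (‖a‖ * ‖a‖) := by
    intro a
    apply pi_norm_le_iff_of_nonneg (by positivity) |>.mpr
    intro k
    calc ‖∑ i ∈ Finset.range ((k : ℕ) + 1), padL d₁ a.1 i * padL d₂ a.2 ((k : ℕ) - i)‖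
        ≤ ∑ i ∈ Finset.range ((k : ℕ) + 1), ‖padL d₁ a.1 i * padL d₂ a.2 ((k : ℕ) - i)‖ :=
          norm_sum_le _ _
      _ ≤ ∑ i ∈ Finset.range ((k : ℕ) + 1), ‖a‖ * ‖a‖ := by
          apply Finset.sum_le_sum
          intro i _
          rw [norm_mul]
          have h1 : ‖padL d₁ a.1 i‖ ≤ ‖a‖ := le_trans (padL_norm_le _ _ _) (norm_fst_le a)
          have h2 : ‖padL d₂ a.2 ((k : ℕ) - i)‖ ≤ ‖a‖ := le_trans (padL_norm_le _ _ _)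
            (norm_snd_le a)
          exact mul_le_mul h1 h2 (norm_nonneg _) (norm_nonneg _)
      _ = ((k : ℕ) + 1 : ℝ) * (‖a‖ * ‖a‖) := by
          rw [Finset.sum_const, Finset.card_range, nsmul_eq_mul]; push_cast; ring
      _ ≤ (m : ℝ) * (‖a‖ * ‖a‖) := by
          apply mul_le_mul_of_nonneg_right _ (by positivity)
          exact_mod_cast Nat.succ_le_of_lt k.isLt
  rw [Asymptotics.isLittleO_iff]
  intro c hc
  have hm1 : (0:ℝ) < m + 1 := by positivity
  have hpos : (0:ℝ) < c / (m + 1) := by positivity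
  filter_upwards [Metric.ball_mem_nhds (0 : (Fin d₁ → ℂ) × (Fin d₂ → ℂ)) hpos] with a ha
  rw [Metric.mem_ball, dist_zero_right] at ha
  rw [key a]
  calc ‖(fun k : Fin m => ∑ i ∈ Finset.range ((k : ℕ) + 1),
          padL d₁ a.1 i * padL d₂ a.2 ((k : ℕ) - i) : Fin m → ℂ)‖
      ≤ (m : ℝ) * (‖a‖ * ‖a‖) := bound a
    _ ≤ (m : ℝ) * ((c / (m + 1)) * ‖a‖) := by
        apply mul_le_mul_of_nonneg_left _ (by positivity)
        exact mul_le_mul_of_nonneg_right (le_of_lt ha) (norm_nonneg _)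
    _ ≤ c * ‖a‖ := by
        rw [show (m:ℝ) * ((c / (m + 1)) * ‖a‖) = ((m:ℝ)/(m+1)) * (c * ‖a‖) by ring]
        apply mul_le_of_le_one_left (by positivity)
        rw [div_le_one hm1]
        linarith

end Hensel
section Hensel2

open Finset Polynomial

lemma henselTL_injective (d₁ d₂ : ℕ) (hd₁ : 1 ≤ d₁) (hd₂ : 1 ≤ d₂)
    (x₀ : (Fin d₁ → ℂ) × (Fin d₂ → ℂ))
    (hcop : IsCoprime (uPoly d₁ x₀.1) (uPoly d₂ x₀.2)) :
    Function.Injective (henselTL d₁ d₂ x₀) := by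
  rw [← LinearMap.ker_eq_bot, LinearMap.ker_eq_bot']
  intro a ha
  have haT : ∀ k : Fin (d₁ + d₂), henselT d₁ d₂ x₀ a k = 0 := by
    intro k; exact congrFun ha k
  set p₁ := linp d₁ (padL d₁ a.1) with hp₁
  set p₂ := linp d₂ (padL d₂ a.2) with hp₂
  set S := p₁ * uPoly d₂ x₀.2 + uPoly d₁ x₀.1 * p₂ with hS
  have hScoeff : ∀ k : ℕ, S.coeff k
      = ∑ i ∈ Finset.range (k + 1),
        (padL d₁ a.1 i * pad d₂ x₀.2 (k - i) + pad d₁ x₀.1 i * padL d₂ a.2 (k - i)) := by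
    intro k
    rw [hS, Polynomial.coeff_add, Polynomial.coeff_mul, Polynomial.coeff_mul,
      Finset.Nat.sum_antidiagonal_eq_sum_range_succ_mk,
      Finset.Nat.sum_antidiagonal_eq_sum_range_succ_mk, ← Finset.sum_add_distrib]
    exact Finset.sum_congr rfl fun i _ => by
      rw [linp_coeff_padL, uPoly_coeff, uPoly_coeff, linp_coeff_padL]
  have hSdeg : S.natDegree < d₁ + d₂ := by
    apply lt_of_le_of_lt (Polynomial.natDegree_add_le _ _)
    rw [max_lt_iff]
    constructor
    · apply lt_of_le_of_lt (Polynomial.natDegree_mul_le)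
      rw [uPoly_natDegree]
      exact Nat.add_lt_add_right (linp_natDegree_lt d₁ hd₁ _) d₂
    · apply lt_of_le_of_lt (Polynomial.natDegree_mul_le)
      rw [uPoly_natDegree]
      exact Nat.add_lt_add_left (linp_natDegree_lt d₂ hd₂ _) d₁
  have hS0 : S = 0 := by
    ext k
    rw [Polynomial.coeff_zero]
    by_cases hk : k < d₁ + d₂
    · rw [hScoeff k]; exact haT ⟨k, hk⟩
    · exact Polynomial.coeff_eq_zero_of_natDegree_lt (lt_of_lt_of_le hSdeg (not_lt.mp hk))
  have hdvd : uPoly d₁ x₀.1 ∣ p₁ * uPoly d₂ x₀.2 := by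
    have : p₁ * uPoly d₂ x₀.2 = uPoly d₁ x₀.1 * (-p₂) := by
      have := eq_neg_of_add_eq_zero_left hS0
      rw [this]; ring
    exact ⟨-p₂, this⟩
  have hp₁0 : p₁ = 0 := by
    by_contra hne
    have h1 : uPoly d₁ x₀.1 ∣ p₁ := hcop.dvd_of_dvd_mul_right hdvd
    have h2 := Polynomial.natDegree_le_of_dvd h1 hne
    rw [uPoly_natDegree] at h2
    exact absurd h2 (not_le.mpr (linp_natDegree_lt d₁ hd₁ _))
  have hp₂0 : p₂ = 0 := by
    have : uPoly d₁ x₀.1 * p₂ = 0 := by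
      have h := hS0
      rw [hS, hp₁0] at h
      simpa using h
    rcases mul_eq_zero.mp this with h | h
    · exact absurd h (uPoly_monic d₁ x₀.1).ne_zero
    · exact h
  have ha1 : a.1 = 0 := by
    funext i
    have := congrArg (fun q => Polynomial.coeff q (i : ℕ)) hp₁0
    simp only [hp₁, linp_coeff_padL, Polynomial.coeff_zero] at this
    unfold padL at this
    rw [dif_pos i.isLt] at this
    simpa using this
  have ha2 : a.2 = 0 := by
    funext i
    have := congrArg (fun q => Polynomial.coeff q (i : ℕ)) hp₂0
    simp only [hp₂, linp_coeff_padL, Polynomial.coeff_zero] at this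
    unfold padL at this
    rw [dif_pos i.isLt] at this
    simpa using this
  exact Prod.ext ha1 ha2

lemma pad_fst_analytic (d₁ d₂ : ℕ) (i : ℕ) (x : (Fin d₁ → ℂ) × (Fin d₂ → ℂ)) :
    AnalyticAt ℂ (fun y : (Fin d₁ → ℂ) × (Fin d₂ → ℂ) => pad d₁ y.1 i) x := by
  show AnalyticAt ℂ (fun y : (Fin d₁ → ℂ) × (Fin d₂ → ℂ) => padL d₁ y.1 i + padC d₁ i) x
  apply AnalyticAt.add _ analyticAt_const
  unfold padL
  split_ifs with h
  · exact ((ContinuousLinearMap.proj (R := ℂ) (φ := fun _ : Fin d₁ => ℂ) ⟨i, h⟩).comp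
      (ContinuousLinearMap.fst ℂ (Fin d₁ → ℂ) (Fin d₂ → ℂ))).analyticAt x
  · exact analyticAt_const

lemma pad_snd_analytic (d₁ d₂ : ℕ) (i : ℕ) (x : (Fin d₁ → ℂ) × (Fin d₂ → ℂ)) :
    AnalyticAt ℂ (fun y : (Fin d₁ → ℂ) × (Fin d₂ → ℂ) => pad d₂ y.2 i) x := by
  show AnalyticAt ℂ (fun y : (Fin d₁ → ℂ) × (Fin d₂ → ℂ) => padL d₂ y.2 i + padC d₂ i) x
  apply AnalyticAt.add _ analyticAt_const
  unfold padL
  split_ifs with h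
  · exact ((ContinuousLinearMap.proj (R := ℂ) (φ := fun _ : Fin d₂ => ℂ) ⟨i, h⟩).comp
      (ContinuousLinearMap.snd ℂ (Fin d₁ → ℂ) (Fin d₂ → ℂ))).analyticAt x
  · exact analyticAt_const

lemma henselPhi_analytic (d₁ d₂ : ℕ) (x : (Fin d₁ → ℂ) × (Fin d₂ → ℂ)) :
    AnalyticAt ℂ (henselPhi d₁ d₂) x := by
  apply AnalyticAt.pi
  intro k
  apply Finset.analyticAt_fun_sum
  intro i _
  exact (pad_fst_analytic d₁ d₂ i x).mul (pad_snd_analytic d₁ d₂ ((k : ℕ) - i) x)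

theorem hensel_factor (d₁ d₂ : ℕ) (hd₁ : 1 ≤ d₁) (hd₂ : 1 ≤ d₂)
    (u₀ : Fin d₁ → ℂ) (v₀ : Fin d₂ → ℂ)
    (hcop : IsCoprime (uPoly d₁ u₀) (uPoly d₂ v₀))
    (c : ℂ → ℕ → ℂ) (hc : ∀ k, k < d₁ + d₂ → AnalyticAt ℂ (fun s => c s k) 0)
    (hc0 : ∀ k, k < d₁ + d₂ → c 0 k = (uPoly d₁ u₀ * uPoly d₂ v₀).coeff k) :
    ∃ u : ℂ → Fin d₁ → ℂ, ∃ v : ℂ → Fin d₂ → ℂ,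
      (∀ i, AnalyticAt ℂ (fun s => u s i) 0) ∧ (∀ i, AnalyticAt ℂ (fun s => v s i) 0) ∧
      ∀ᶠ s in nhds (0 : ℂ), ∀ W : ℂ,
        W ^ (d₁ + d₂) + ∑ k ∈ Finset.range (d₁ + d₂), c s k * W ^ k
          = Polynomial.eval W (uPoly d₁ (u s)) * Polynomial.eval W (uPoly d₂ (v s)) := by
  classical
  set x₀ : (Fin d₁ → ℂ) × (Fin d₂ → ℂ) := (u₀, v₀) with hx₀
  have hinj : Function.Injective (henselTL d₁ d₂ x₀) :=
    henselTL_injective d₁ d₂ hd₁ hd₂ x₀ hcop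
  have hrank : Module.finrank ℂ ((Fin d₁ → ℂ) × (Fin d₂ → ℂ))
      = Module.finrank ℂ (Fin (d₁ + d₂) → ℂ) := by
    simp [Module.finrank_prod, Module.finrank_pi]
  have hsurj : Function.Surjective (henselTL d₁ d₂ x₀) :=
    (LinearMap.injective_iff_surjective_of_finrank_eq_finrank hrank).mp hinj
  set eL : ((Fin d₁ → ℂ) × (Fin d₂ → ℂ)) ≃ₗ[ℂ] (Fin (d₁ + d₂) → ℂ) :=
    LinearEquiv.ofBijective _ ⟨hinj, hsurj⟩ with heL
  set i : ((Fin d₁ → ℂ) × (Fin d₂ → ℂ)) ≃L[ℂ] (Fin (d₁ + d₂) → ℂ) :=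
    eL.toContinuousLinearEquiv with hi
  have hderiv : HasFDerivAt (henselPhi d₁ d₂)
      ((i : ((Fin d₁ → ℂ) × (Fin d₂ → ℂ)) →L[ℂ] (Fin (d₁ + d₂) → ℂ))) x₀ := by
    have h1 := hensel_hasFDerivAt d₁ d₂ x₀
    have h2 : (i : ((Fin d₁ → ℂ) × (Fin d₂ → ℂ)) →L[ℂ] (Fin (d₁ + d₂) → ℂ))
        = LinearMap.toContinuousLinearMap (henselTL d₁ d₂ x₀) := by
      apply ContinuousLinearMap.ext
      intro a
      rfl
    rwa [h2]
  set cpi : ℂ → (Fin (d₁ + d₂) → ℂ) := fun s k => c s (k : ℕ) with hcpi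
  have hcpiA : AnalyticAt ℂ cpi 0 := AnalyticAt.pi (fun k => hc (k : ℕ) k.isLt)
  have hcpi0 : cpi 0 = henselPhi d₁ d₂ x₀ := by
    funext k
    show c 0 (k : ℕ) = henselPhi d₁ d₂ x₀ k
    rw [hc0 (k : ℕ) k.isLt, henselPhi_eq_coeff]
  obtain ⟨w, hwA, hw0, hwev⟩ := analytic_param_solve (henselPhi_analytic d₁ d₂ x₀) i hderiv
    hcpiA (by rw [hcpi0])
  refine ⟨fun s => (w s).1, fun s => (w s).2, ?_, ?_, ?_⟩
  · intro j
    exact (((ContinuousLinearMap.proj (R := ℂ) (φ := fun _ : Fin d₁ => ℂ) j).comp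
      (ContinuousLinearMap.fst ℂ (Fin d₁ → ℂ) (Fin d₂ → ℂ))).analyticAt (w 0)).comp hwA
  · intro j
    exact (((ContinuousLinearMap.proj (R := ℂ) (φ := fun _ : Fin d₂ => ℂ) j).comp
      (ContinuousLinearMap.snd ℂ (Fin d₁ → ℂ) (Fin d₂ → ℂ))).analyticAt (w 0)).comp hwA
  · filter_upwards [hwev] with s hs W
    have hcoeff : ∀ k : Fin (d₁ + d₂),
        (uPoly d₁ (w s).1 * uPoly d₂ (w s).2).coeff (k : ℕ) = c s (k : ℕ) := by
      intro k
      rw [← henselPhi_eq_coeff]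
      exact congrFun hs k
    have hmonic : (uPoly d₁ (w s).1 * uPoly d₂ (w s).2).Monic :=
      (uPoly_monic _ _).mul (uPoly_monic _ _)
    have hdeg : (uPoly d₁ (w s).1 * uPoly d₂ (w s).2).natDegree = d₁ + d₂ := by
      rw [(uPoly_monic _ _).natDegree_mul (uPoly_monic _ _), uPoly_natDegree, uPoly_natDegree]
    rw [← Polynomial.eval_mul, eval_monic_aux hmonic hdeg]
    congr 1
    apply Finset.sum_congr rfl
    intro k hk
    rw [hcoeff ⟨k, Finset.mem_range.mp hk⟩]

end Hensel2
section SplitCenter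

open Polynomial

lemma multiset_coprime_prod {p : Polynomial ℂ} (t : Multiset (Polynomial ℂ))
    (h : ∀ q ∈ t, IsCoprime p q) : IsCoprime p t.prod := by
  induction t using Multiset.induction_on with
  | empty => simpa using isCoprime_one_right
  | cons a s ih =>
    rw [Multiset.prod_cons]
    exact IsCoprime.mul_right (h a (Multiset.mem_cons_self a s))
      (ih fun q hq => h q (Multiset.mem_cons_of_mem hq))

lemma monic_eq_uPoly {p : Polynomial ℂ} {d : ℕ} (hm : p.Monic) (hd : p.natDegree = d) :
    p = uPoly d (fun i => p.coeff i) := by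
  ext k
  rw [uPoly_coeff]
  unfold pad padL padC
  rcases lt_trichotomy k d with h | h | h
  · simp [h, Nat.ne_of_lt h]
  · subst h
    simp [lt_irrefl, ← hd, hm.coeff_natDegree]
  · have : p.natDegree < k := hd ▸ h
    simp [not_lt.mpr (le_of_lt h), Nat.ne_of_gt h, Polynomial.coeff_eq_zero_of_natDegree_lt this]

lemma split_lemma (m : ℕ) (q : Polynomial ℂ) (hq : q.Monic) (hdeg : q.natDegree = m)
    (hnot : ∀ c : ℂ, q ≠ (X - C c) ^ m) :
    ∃ (d₁ d₂ : ℕ) (u₀ : Fin d₁ → ℂ) (v₀ : Fin d₂ → ℂ), 1 ≤ d₁ ∧ 1 ≤ d₂ ∧ d₁ + d₂ = m ∧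
      IsCoprime (uPoly d₁ u₀) (uPoly d₂ v₀) ∧ uPoly d₁ u₀ * uPoly d₂ v₀ = q := by
  classical
  have hsplits : Splits q := IsAlgClosed.splits q
  have hprod : q = (q.roots.map fun a => X - C a).prod :=
    hsplits.eq_prod_roots_of_monic hq
  have hcard : q.roots.card = m := by
    have := hsplits.natDegree_eq_card_roots.symm
    simpa [hdeg] using this
  have hm : 1 ≤ m := by
    by_contra h
    push_neg at h
    interval_cases m
    exact hnot 0 (by simpa using hprod ▸ (by simp [Multiset.card_eq_zero.mp hcard]))
  have hroots_ne : q.roots ≠ 0 := by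
    intro h0
    rw [h0] at hcard
    simp at hcard
    omega
  obtain ⟨r₁, hr₁⟩ := Multiset.exists_mem_of_ne_zero hroots_ne
  by_cases hall : ∀ s ∈ q.roots, s = r₁
  · exfalso
    have : q.roots = Multiset.replicate m r₁ := Multiset.eq_replicate.mpr ⟨hcard, hall⟩
    apply hnot r₁
    rw [hprod, this]
    simp [Multiset.map_replicate, Multiset.prod_replicate]
  · push_neg at hall
    obtain ⟨r₂, hr₂, hr₂ne⟩ := hall
    set t := q.roots.filter (fun s => ¬ s = r₁) with ht
    set n₁ := q.roots.count r₁ with hn₁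
    have hn₁pos : 1 ≤ n₁ := Multiset.one_le_count_iff_mem.mpr hr₁
    set A : Polynomial ℂ := (X - C r₁) ^ n₁ with hA
    set B : Polynomial ℂ := (t.map fun a => X - C a).prod with hB
    have hsplit : q.roots.filter (fun s => s = r₁) + t = q.roots := by
      rw [ht]; exact Multiset.filter_add_not _ _
    have hfiltereq : q.roots.filter (fun s => s = r₁) = Multiset.replicate n₁ r₁ := by
      rw [hn₁]; exact Multiset.filter_eq' q.roots r₁
    have hqAB : A * B = q := by
      conv_rhs => rw [hprod]
      rw [← hsplit, Multiset.map_add, Multiset.prod_add, hfiltereq]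
      simp [Multiset.map_replicate, Multiset.prod_replicate, hA, hB]
    have hAmonic : A.Monic := (monic_X_sub_C r₁).pow n₁
    have hBmonic : B.Monic :=
      monic_multiset_prod_of_monic _ _ fun a _ => monic_X_sub_C a
    have hAdeg : A.natDegree = n₁ := by
      rw [hA, Polynomial.natDegree_pow, natDegree_X_sub_C, mul_one]
    have hBdeg : B.natDegree = t.card := by
      rw [hB, Polynomial.natDegree_multiset_prod_of_monic _ fun f hf => ?_]
      · rw [Multiset.map_map]
        have : (Multiset.map (fun a => ((X - C a : Polynomial ℂ)).natDegree) t)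
            = Multiset.map (fun _ => 1) t := Multiset.map_congr rfl fun a _ => natDegree_X_sub_C a
        rw [Function.comp_def, this]
        simp [Multiset.map_const']
      · obtain ⟨a, _, rfl⟩ := Multiset.mem_map.mp hf
        exact monic_X_sub_C a
    have htcard : n₁ + t.card = m := by
      have := congrArg Multiset.card hsplit
      rw [Multiset.card_add, hfiltereq, Multiset.card_replicate] at this
      rw [this, hcard]
    have htpos : 1 ≤ t.card := by
      have : r₂ ∈ t := by
        rw [ht, Multiset.mem_filter]
        exact ⟨hr₂, hr₂ne⟩
      exact Multiset.one_le_count_iff_mem.mpr this |>.trans (Multiset.count_le_card _ _)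
    have hcop : IsCoprime A B := by
      apply IsCoprime.pow_left
      apply multiset_coprime_prod
      intro p hp
      obtain ⟨a, ha, rfl⟩ := Multiset.mem_map.mp hp
      have hane : a ≠ r₁ := by
        rw [ht, Multiset.mem_filter] at ha
        exact ha.2
      apply isCoprime_X_sub_C_of_isUnit_sub
      exact Ne.isUnit (sub_ne_zero_of_ne (Ne.symm hane))
    refine ⟨n₁, t.card, fun i => A.coeff i, fun i => B.coeff i, hn₁pos, htpos, htcard, ?_, ?_⟩
    · rw [← monic_eq_uPoly hAmonic hAdeg, ← monic_eq_uPoly hBmonic hBdeg]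
      exact hcop
    · rw [← monic_eq_uPoly hAmonic hAdeg, ← monic_eq_uPoly hBmonic hBdeg]
      exact hqAB

end SplitCenter
section Center

open Polynomial Finset

lemma npoly_as_sum (d : ℕ) (f : ℕ → ℂ) :
    npoly d f = ∑ j ∈ Finset.range (d + 1), C (if j = d then 1 else f j) * X ^ j := by
  rw [Finset.sum_range_succ, if_pos rfl, map_one, one_mul, npoly, add_comm]
  congr 1
  exact Finset.sum_congr rfl fun j hj => by rw [if_neg (Nat.ne_of_lt (Finset.mem_range.mp hj))]

noncomputable def csigma (m : ℕ) (b : ℕ → ℂ → ℂ) : ℂ → ℂ :=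
  fun t => (m : ℂ)⁻¹ * b (m - 1) t

noncomputable def cb (m : ℕ) (b : ℕ → ℂ → ℂ) (k : ℕ) (t : ℂ) : ℂ :=
  ∑ j ∈ Finset.range (m + 1),
    (if j = m then 1 else b j t) * ((-(csigma m b t)) ^ (j - k) * (j.choose k))

lemma center_coeff (m : ℕ) (b : ℕ → ℂ → ℂ) (k : ℕ) (t : ℂ) :
    ((npoly m (fun j => b j t)).comp (X - C (csigma m b t))).coeff k = cb m b k t := by
  rw [npoly_as_sum]
  rw [show X - C (csigma m b t) = X + C (-(csigma m b t)) by rw [map_neg]; ring]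
  rw [Polynomial.comp, Polynomial.eval₂_finset_sum]
  rw [Polynomial.finset_sum_coeff]
  unfold cb
  apply Finset.sum_congr rfl
  intro j _
  rw [Polynomial.eval₂_mul, Polynomial.eval₂_C, Polynomial.eval₂_X_pow]
  rw [Polynomial.coeff_C_mul, Polynomial.coeff_X_add_C_pow]

lemma center_comp_monic (m : ℕ) (b : ℕ → ℂ → ℂ) (t : ℂ) :
    ((npoly m (fun j => b j t)).comp (X - C (csigma m b t))).Monic :=
  (npoly_monic _ _).comp_X_sub_C _

lemma center_comp_natDegree (m : ℕ) (b : ℕ → ℂ → ℂ) (t : ℂ) :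
    ((npoly m (fun j => b j t)).comp (X - C (csigma m b t))).natDegree = m := by
  rw [Polynomial.natDegree_comp, npoly_natDegree, natDegree_X_sub_C, mul_one]

lemma center_m1 (m : ℕ) (hm : 1 ≤ m) (b : ℕ → ℂ → ℂ) (t : ℂ) : cb m b (m - 1) t = 0 := by
  unfold cb
  have hsplit : m + 1 = (m - 1) + 2 := by omega
  rw [hsplit, Finset.sum_range_succ, Finset.sum_range_succ]
  have h1 : ∀ j ∈ Finset.range (m - 1),
      (if j = m then 1 else b j t) * ((-(csigma m b t)) ^ (j - (m - 1)) * (j.choose (m - 1)))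
        = 0 := by
    intro j hj
    have hj' : j < m - 1 := Finset.mem_range.mp hj
    rw [Nat.choose_eq_zero_of_lt hj']
    simp
  rw [Finset.sum_eq_zero h1, zero_add]
  have hm1 : (m - 1) + 1 = m := by omega
  rw [hm1]
  have e1 : (if m - 1 = m then (1:ℂ) else b (m-1) t) = b (m-1) t := by
    rw [if_neg (by omega)]
  have e2 : (if m = m then (1:ℂ) else b m t) = 1 := if_pos rfl
  rw [e1, e2, Nat.sub_self, pow_zero, Nat.choose_self, one_mul]
  have e3 : m - (m - 1) = 1 := by omega
  have e4 : m.choose (m - 1) = m := by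
    conv_lhs => rw [← hm1]
    rw [Nat.add_sub_cancel, Nat.choose_succ_self_right, hm1]
  rw [e4, e3, pow_one]
  unfold csigma
  push_cast
  have hmne : (m : ℂ) ≠ 0 := by
    exact_mod_cast Nat.cast_ne_zero.mpr (by omega)
  field_simp
  ring

lemma center_eval (m : ℕ) (b : ℕ → ℂ → ℂ) (t W : ℂ) :
    W ^ m + ∑ k ∈ Finset.range m, cb m b k t * W ^ k
      = (W - csigma m b t) ^ m
        + ∑ j ∈ Finset.range m, b j t * (W - csigma m b t) ^ j := by
  have lhs : W ^ m + ∑ k ∈ Finset.range m, cb m b k t * W ^ k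
      = ((npoly m (fun j => b j t)).comp (X - C (csigma m b t))).eval W := by
    rw [eval_monic_aux (center_comp_monic m b t) (center_comp_natDegree m b t)]
    congr 1
    exact Finset.sum_congr rfl fun k _ => by rw [center_coeff]
  rw [lhs, Polynomial.eval_comp]
  simp only [Polynomial.eval_sub, Polynomial.eval_X, Polynomial.eval_C]
  rw [npoly_eval]

lemma cb_analytic (m : ℕ) (hm : 1 ≤ m) (b : ℕ → ℂ → ℂ)
    (hb : ∀ j, j < m → AnalyticAt ℂ (b j) 0) (k : ℕ) :
    AnalyticAt ℂ (cb m b k) 0 := by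
  apply Finset.analyticAt_fun_sum
  intro j hj
  have hσ : AnalyticAt ℂ (csigma m b) 0 := by
    unfold csigma
    exact analyticAt_const.mul (hb (m - 1) (by omega))
  apply AnalyticAt.mul
  · by_cases h : j = m
    · rw [show (fun t => if j = m then (1:ℂ) else b j t) = fun _ => 1 by
        funext t; rw [if_pos h]]
      exact analyticAt_const
    · rw [show (fun t => if j = m then (1:ℂ) else b j t) = b j by
        funext t; rw [if_neg h]]
      exact hb j (by
        have := Finset.mem_range.mp hj
        omega)
  · exact (hσ.neg.pow _).mul analyticAt_const

end Center
section Core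

open Polynomial Finset Filter

lemma choose_pred {m : ℕ} (hm : 1 ≤ m) : m.choose (m - 1) = m := by
  have hm1 : (m - 1) + 1 = m := by omega
  conv_lhs => rw [← hm1]
  rw [Nat.add_sub_cancel, Nat.choose_succ_self_right, hm1]

lemma scale_pow_aux {a : ℂ} (ha : a ≠ 0) (W : ℂ) {k m : ℕ} (hk : k ≤ m) :
    a ^ m * (W / a) ^ k = a ^ (m - k) * W ^ k := by
  rw [div_pow, show a ^ m = a ^ (m - k) * a ^ k by rw [← pow_add]; congr 1; omega]
  field_simp

lemma scale_root_identity (m : ℕ) {a : ℂ} (ha : a ≠ 0) (dc : ℕ → ℂ) (hf : ℕ → ℂ)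
    (hid : ∀ Y : ℂ, Y ^ m + ∑ k ∈ Finset.range m, dc k * Y ^ k
      = ∏ i ∈ Finset.range m, (Y - hf i)) (W : ℂ) :
    W ^ m + ∑ k ∈ Finset.range m, dc k * a ^ (m - k) * W ^ k
      = ∏ i ∈ Finset.range m, (W - a * hf i) := by
  have step1 : W ^ m + ∑ k ∈ Finset.range m, dc k * a ^ (m - k) * W ^ k
      = a ^ m * ((W / a) ^ m + ∑ k ∈ Finset.range m, dc k * (W / a) ^ k) := by
    rw [mul_add, Finset.mul_sum, scale_pow_aux ha W (le_refl m), Nat.sub_self, pow_zero, one_mul]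
    congr 1
    apply Finset.sum_congr rfl
    intro k hk
    have hkm : k ≤ m := le_of_lt (Finset.mem_range.mp hk)
    rw [show a ^ m * (dc k * (W / a) ^ k) = dc k * (a ^ m * (W / a) ^ k) by ring,
      scale_pow_aux ha W hkm]
    ring
  rw [step1, hid (W / a)]
  rw [show (a:ℂ) ^ m = ∏ _i ∈ Finset.range m, a by rw [Finset.prod_const, Finset.card_range]]
  rw [← Finset.prod_mul_distrib]
  apply Finset.prod_congr rfl
  intro i _
  rw [mul_sub, mul_div_cancel₀ W ha]

end Core
section PuiseuxCore

open Polynomial Finset Filter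

lemma analyticAt_pow' (n : ℕ) (x : ℂ) : AnalyticAt ℂ (fun z : ℂ => z ^ n) x :=
  analyticAt_id.pow n

lemma analyticAt_comp_pow {g : ℂ → ℂ} (hg : AnalyticAt ℂ g 0) (n : ℕ) (hn : n ≠ 0) :
    AnalyticAt ℂ (fun z : ℂ => g (z ^ n)) 0 := by
  have hg' : AnalyticAt ℂ g ((fun z : ℂ => z ^ n) 0) := by simpa [zero_pow hn] using hg
  exact AnalyticAt.comp (f := fun z : ℂ => z ^ n) (x := 0) hg' (analyticAt_pow' n 0)

lemma pow_tendsto_zero (n : ℕ) (hn : 1 ≤ n) :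
    Filter.Tendsto (fun w : ℂ => w ^ n) (nhds 0) (nhds 0) := by
  have := (continuous_pow n (M := ℂ)).tendsto (0 : ℂ)
  rwa [zero_pow (by omega : n ≠ 0)] at this

theorem puiseux_core (m : ℕ) : ∀ b : ℕ → ℂ → ℂ, (∀ j, j < m → AnalyticAt ℂ (b j) 0) →
    ∃ p : ℕ, 1 ≤ p ∧ ∃ h : ℕ → ℂ → ℂ, (∀ i, i < m → AnalyticAt ℂ (h i) 0) ∧
      ∀ᶠ z in nhds (0 : ℂ), z ≠ 0 → ∀ Y : ℂ,
        Y ^ m + ∑ j ∈ Finset.range m, b j (z ^ p) * Y ^ j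
          = ∏ i ∈ Finset.range m, (Y - h i z) := by
  induction m using Nat.strong_induction_on with
  | _ m IH =>
  intro b hb
  rcases Nat.eq_zero_or_pos m with hm0 | hm
  · subst hm0
    exact ⟨1, le_refl 1, 0, fun i hi => absurd hi (Nat.not_lt_zero i),
      Filter.Eventually.of_forall (fun z _ Y => by simp)⟩
  classical
  by_cases hA : ∀ k, k < m → (∀ᶠ t in nhds (0 : ℂ), cb m b k t = 0)
  · -- Case A : after recentering all coefficients vanish identically near 0
    refine ⟨1, le_refl 1, fun _ z => -csigma m b z, fun i _ => ?_, ?_⟩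
    · have hσa : AnalyticAt ℂ (csigma m b) 0 :=
        analyticAt_const.mul (hb (m - 1) (by omega))
      exact hσa.neg
    · have hAev : ∀ᶠ t in nhds (0 : ℂ), ∀ k ∈ Finset.range m, cb m b k t = 0 :=
        (Filter.eventually_all_finset _).mpr (fun k hk => hA k (Finset.mem_range.mp hk))
      filter_upwards [hAev] with t ht _ Y
      have hce := center_eval m b t (Y + csigma m b t)
      rw [add_sub_cancel_right] at hce
      have hzero : ∑ k ∈ Finset.range m, cb m b k t * (Y + csigma m b t) ^ k = 0 :=
        Finset.sum_eq_zero fun k hk => by rw [ht k hk, zero_mul]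
      rw [hzero, add_zero] at hce
      simp only [pow_one]
      rw [← hce]
      simp [sub_neg_eq_add, Finset.prod_const, Finset.card_range]
  · -- Case B : Newton polygon + Hensel + recursion
    push_neg at hA
    set S : Finset ℕ := (Finset.range m).filter
      (fun k => ¬ (∀ᶠ t in nhds (0 : ℂ), cb m b k t = 0)) with hSdef
    have hSne : S.Nonempty := by
      obtain ⟨k, hk, hknot⟩ := hA
      exact ⟨k, Finset.mem_filter.mpr ⟨Finset.mem_range.mpr hk, Filter.not_eventually.mpr hknot⟩⟩
    have hfac : ∀ k ∈ S, ∃ (n : ℕ) (g : ℂ → ℂ), AnalyticAt ℂ g 0 ∧ g 0 ≠ 0 ∧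
        ∀ᶠ t in nhds (0 : ℂ), cb m b k t = t ^ n * g t := by
      intro k hk
      have hka : AnalyticAt ℂ (cb m b k) 0 := cb_analytic m hm b hb k
      have hne : analyticOrderAt (cb m b k) 0 ≠ ⊤ := fun htop =>
        (Finset.mem_filter.mp hk).2 (analyticOrderAt_eq_top.mp htop)
      obtain ⟨n, hn⟩ := WithTop.ne_top_iff_exists.mp hne
      obtain ⟨g, hg1, hg2, hg3⟩ := (hka.analyticOrderAt_eq_natCast).mp hn.symm
      refine ⟨n, g, hg1, hg2, ?_⟩
      filter_upwards [hg3] with t ht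
      rw [ht]
      simp [smul_eq_mul]
    choose! αf gf hga hg0 hgev using hfac
    obtain ⟨j₀, hj₀S, hj₀min⟩ := Finset.exists_min_image S
      (fun k => (αf k : ℚ) / ((m - k : ℕ) : ℚ)) hSne
    have hj₀m : j₀ < m := Finset.mem_range.mp (Finset.mem_filter.mp hj₀S).1
    set A := αf j₀ with hAdef
    set Bn := m - j₀ with hBndef
    have hBn1 : 1 ≤ Bn := by omega
    have hkey : ∀ k ∈ S, A * (m - k) ≤ Bn * αf k := by
      intro k hk
      have hkm : k < m := Finset.mem_range.mp (Finset.mem_filter.mp hk).1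
      have h1 := hj₀min k hk
      have hd1 : (0 : ℚ) < ((m - j₀ : ℕ) : ℚ) := by exact_mod_cast Nat.sub_pos_of_lt hj₀m
      have hd2 : (0 : ℚ) < ((m - k : ℕ) : ℚ) := by exact_mod_cast Nat.sub_pos_of_lt hkm
      rw [div_le_div_iff₀ hd1 hd2] at h1
      have h2 : A * (m - k) ≤ αf k * (m - j₀) := by exact_mod_cast h1
      calc A * (m - k) ≤ αf k * (m - j₀) := h2
        _ = Bn * αf k := by rw [hBndef, Nat.mul_comm]
    set dcoef : ℕ → ℂ → ℂ := fun k s =>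
      if k ∈ S then s ^ (Bn * αf k - A * (m - k)) * gf k (s ^ Bn) else 0 with hdcoef
    have hdan : ∀ k, AnalyticAt ℂ (fun s => dcoef k s) 0 := by
      intro k
      by_cases hk : k ∈ S
      · have heq : (fun s => dcoef k s)
            = fun s => s ^ (Bn * αf k - A * (m - k)) * gf k (s ^ Bn) := by
          funext s; rw [hdcoef]; simp [hk]
        rw [heq]
        exact (analyticAt_pow' _ 0).mul
          (analyticAt_comp_pow (hga k hk) Bn (by omega))
      · have heq : (fun s => dcoef k s) = fun _ => 0 := by
          funext s; rw [hdcoef]; simp [hk]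
        rw [heq]; exact analyticAt_const
    have hmnotS : (m - 1) ∉ S := by
      intro hmem
      exact (Finset.mem_filter.mp hmem).2
        (Filter.Eventually.of_forall (center_m1 m hm b))
    have hdm1 : ∀ s, dcoef (m - 1) s = 0 := fun s => by rw [hdcoef]; simp [hmnotS]
    have hdj₀ : dcoef j₀ 0 ≠ 0 := by
      rw [hdcoef]
      simp only [hj₀S, if_pos]
      have hBA : Bn * αf j₀ = A * (m - j₀) := by rw [hAdef, hBndef, Nat.mul_comm]
      have hexp : Bn * αf j₀ - A * (m - j₀) = 0 := by omega
      rw [hexp, pow_zero, one_mul, zero_pow (show Bn ≠ 0 by omega)]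
      exact hg0 j₀ hj₀S
    have htrans : ∀ᶠ s in nhds (0 : ℂ), ∀ k ∈ Finset.range m,
        cb m b k (s ^ Bn) = dcoef k s * s ^ (A * (m - k)) := by
      rw [Filter.eventually_all_finset]
      intro k hk
      by_cases hkS : k ∈ S
      · filter_upwards [(pow_tendsto_zero Bn hBn1).eventually (hgev k hkS)] with s hs
        rw [hs, hdcoef]
        simp only [hkS, if_pos]
        rw [← pow_mul]
        rw [show s ^ (Bn * αf k - A * (m - k)) * gf k (s ^ Bn) * s ^ (A * (m - k))
            = s ^ (Bn * αf k - A * (m - k)) * s ^ (A * (m - k)) * gf k (s ^ Bn) by ring]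
        rw [← pow_add, Nat.sub_add_cancel (hkey k hkS)]
      · have hkev : ∀ᶠ t in nhds (0 : ℂ), cb m b k t = 0 := by
          by_contra hcon
          exact hkS (Finset.mem_filter.mpr ⟨hk, hcon⟩)
        filter_upwards [(pow_tendsto_zero Bn hBn1).eventually hkev] with s hs
        rw [hs, hdcoef]
        simp [hkS]
    set q : Polynomial ℂ := npoly m (fun k => dcoef k 0) with hqdef
    have hqc : ∀ k, k < m → q.coeff k = dcoef k 0 := by
      intro k hk
      rw [hqdef, npoly_coeff]
      simp [hk]
    have hnot : ∀ c : ℂ, q ≠ (X - C c) ^ m := by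
      intro c hqe
      have h1 : q.coeff (m - 1) = 0 := by rw [hqc (m - 1) (by omega)]; exact hdm1 0
      have h2 : ((X - C c) ^ m).coeff (m - 1) = -c * m := by
        rw [show (X : Polynomial ℂ) - C c = X + C (-c) by rw [map_neg]; ring,
          Polynomial.coeff_X_add_C_pow]
        rw [show m - (m - 1) = 1 by omega, choose_pred hm, pow_one]
      rw [hqe, h2] at h1
      have hc0 : c = 0 := by
        have hmne : (m : ℂ) ≠ 0 := Nat.cast_ne_zero.mpr (by omega)
        rcases mul_eq_zero.mp h1 with h | h
        · simpa using h
        · exact absurd h hmne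
      subst hc0
      have h3 : q.coeff j₀ = 0 := by
        rw [hqe]
        simp [Polynomial.coeff_X_pow, Nat.ne_of_lt hj₀m]
      rw [hqc j₀ hj₀m] at h3
      exact hdj₀ h3
    obtain ⟨d₁, d₂, u₀, v₀, hd₁, hd₂, hmsum, hcop, hquv⟩ :=
      split_lemma m q (npoly_monic _ _) (npoly_natDegree _ _) hnot
    have hc0 : ∀ k, k < d₁ + d₂ → dcoef k 0 = (uPoly d₁ u₀ * uPoly d₂ v₀).coeff k := by
      intro k hk
      rw [hquv, hqc k (by omega)]
    obtain ⟨u, v, hu, hv, hev⟩ := hensel_factor d₁ d₂ hd₁ hd₂ u₀ v₀ hcop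
      (fun s k => dcoef k s) (fun k _ => hdan k) hc0
    have hd₁m : d₁ < m := by omega
    have hd₂m : d₂ < m := by omega
    have huan : ∀ i, i < d₁ → AnalyticAt ℂ (fun s => padL d₁ (u s) i) 0 := by
      intro i hi
      have heq : (fun s => padL d₁ (u s) i) = fun s => u s ⟨i, hi⟩ := by
        funext s; unfold padL; rw [dif_pos hi]
      rw [heq]; exact hu ⟨i, hi⟩
    have hvan : ∀ i, i < d₂ → AnalyticAt ℂ (fun s => padL d₂ (v s) i) 0 := by
      intro i hi
      have heq : (fun s => padL d₂ (v s) i) = fun s => v s ⟨i, hi⟩ := by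
        funext s; unfold padL; rw [dif_pos hi]
      rw [heq]; exact hv ⟨i, hi⟩
    obtain ⟨p₁, hp₁, h₁, hh₁, hev₁⟩ := IH d₁ hd₁m (fun i s => padL d₁ (u s) i) huan
    obtain ⟨p₂, hp₂, h₂, hh₂, hev₂⟩ := IH d₂ hd₂m (fun i s => padL d₂ (v s) i) hvan
    set P₃ := p₁ * p₂ with hP₃def
    have hP₃1 : 1 ≤ P₃ := Nat.mul_le_mul hp₁ hp₂
    set pf := P₃ * Bn with hpfdef
    have hpf1 : 1 ≤ pf := Nat.mul_le_mul hP₃1 hBn1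
    refine ⟨pf, hpf1, fun i w => w ^ (A * P₃) *
        (if i < d₁ then h₁ i (w ^ p₂) else h₂ (i - d₁) (w ^ p₁)) - csigma m b (w ^ pf),
      ?_, ?_⟩
    · intro i him
      apply AnalyticAt.sub
      · apply AnalyticAt.mul (analyticAt_pow' _ 0)
        by_cases hi : i < d₁
        · simp only [if_pos hi]
          exact analyticAt_comp_pow (hh₁ i hi) p₂ (by omega)
        · simp only [if_neg hi]
          have hi2 : i - d₁ < d₂ := by omega
          exact analyticAt_comp_pow (hh₂ _ hi2) p₁ (by omega)
      · have hσa0 : AnalyticAt ℂ (csigma m b) 0 :=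
          analyticAt_const.mul (hb (m - 1) (by omega))
        exact analyticAt_comp_pow hσa0 pf (by omega)
    · have E1 := (pow_tendsto_zero P₃ hP₃1).eventually hev
      have E2 := (pow_tendsto_zero p₂ hp₂).eventually hev₁
      have E3 := (pow_tendsto_zero p₁ hp₁).eventually hev₂
      have E4 := (pow_tendsto_zero P₃ hP₃1).eventually htrans
      filter_upwards [E1, E2, E3, E4] with w hw1 hw2 hw3 hw4 hwne Y
      set t := w ^ pf with htdef
      set s := w ^ P₃ with hsdef
      set a := w ^ (A * P₃) with hadef
      have hane : a ≠ 0 := pow_ne_zero _ hwne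
      have hsne : s ≠ 0 := pow_ne_zero _ hwne
      have hts : t = s ^ Bn := by rw [htdef, hsdef, ← pow_mul]
      have has : a = s ^ A := by rw [hadef, hsdef, ← pow_mul, Nat.mul_comm]
      have hid : ∀ Y' : ℂ, Y' ^ m + ∑ k ∈ Finset.range m, dcoef k s * Y' ^ k
          = ∏ i ∈ Finset.range m,
              (Y' - (if i < d₁ then h₁ i (w ^ p₂) else h₂ (i - d₁) (w ^ p₁))) := by
        intro Y'
        have e1 := hw1 Y'
        rw [hmsum] at e1
        have e2 := hw2 (pow_ne_zero _ hwne) Y'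
        have e3 := hw3 (pow_ne_zero _ hwne) Y'
        have hup : Polynomial.eval Y' (uPoly d₁ (u s))
            = ∏ i ∈ Finset.range d₁, (Y' - h₁ i (w ^ p₂)) := by
          have harg : (w ^ p₂) ^ p₁ = s := by
            rw [hsdef, ← pow_mul, Nat.mul_comm p₂ p₁]
          rw [uPoly, npoly_eval, ← harg]
          exact e2
        have hvp : Polynomial.eval Y' (uPoly d₂ (v s))
            = ∏ i ∈ Finset.range d₂, (Y' - h₂ i (w ^ p₁)) := by
          have harg : (w ^ p₁) ^ p₂ = s := by
            rw [hsdef, ← pow_mul]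
          rw [uPoly, npoly_eval, ← harg]
          exact e3
        calc Y' ^ m + ∑ k ∈ Finset.range m, dcoef k s * Y' ^ k
            = Polynomial.eval Y' (uPoly d₁ (u s)) * Polynomial.eval Y' (uPoly d₂ (v s)) := e1
          _ = (∏ i ∈ Finset.range d₁, (Y' - h₁ i (w ^ p₂)))
              * ∏ i ∈ Finset.range d₂, (Y' - h₂ i (w ^ p₁)) := by rw [hup, hvp]
          _ = ∏ i ∈ Finset.range m,
              (Y' - (if i < d₁ then h₁ i (w ^ p₂) else h₂ (i - d₁) (w ^ p₁))) := by
              rw [← hmsum, Finset.prod_range_add]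
              congr 1
              · exact Finset.prod_congr rfl fun i hi => by
                  rw [if_pos (Finset.mem_range.mp hi)]
              · exact Finset.prod_congr rfl fun i _ => by
                  rw [if_neg (by omega), Nat.add_sub_cancel_left]
      have hgoal1 := center_eval m b t (Y + csigma m b t)
      rw [add_sub_cancel_right] at hgoal1
      rw [← hgoal1]
      have hrw : ∀ i ∈ Finset.range m,
          Y - (a * (if i < d₁ then h₁ i (w ^ p₂) else h₂ (i - d₁) (w ^ p₁)) - csigma m b t)
            = (Y + csigma m b t)
              - a * (if i < d₁ then h₁ i (w ^ p₂) else h₂ (i - d₁) (w ^ p₁)) :=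
        fun i _ => by ring
      rw [Finset.prod_congr rfl hrw]
      have hsum : ∑ k ∈ Finset.range m, cb m b k t * (Y + csigma m b t) ^ k
          = ∑ k ∈ Finset.range m, dcoef k s * a ^ (m - k) * (Y + csigma m b t) ^ k := by
        apply Finset.sum_congr rfl
        intro k hk
        rw [hts, hw4 k hk, pow_mul, ← has]
      rw [hsum]
      exact scale_root_identity m hane _ _ hid (Y + csigma m b t)

end PuiseuxCore
section Final

open Polynomial Finset Filter

lemma poly_analyticAt (P : Polynomial ℂ) (x : ℂ) : AnalyticAt ℂ (fun z => P.eval z) x := by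
  have heq : (fun z => P.eval z)
      = fun z => ∑ i ∈ Finset.range (P.natDegree + 1), P.coeff i * z ^ i := by
    funext z
    rw [Polynomial.eval_eq_sum_range]
  rw [heq]
  apply Finset.analyticAt_fun_sum
  intro i _
  exact analyticAt_const.mul (analyticAt_pow' i x)

/-- For a polynomial `P_ε(X) = Σ_{j=0}^m c_j(ε) X^j` whose coefficients are polynomial in `ε`
and whose leading coefficient is `ε^M a_m` with `a_m ≠ 0`: the `m` roots can be written as
continuous functions `ξ₁(ε), …, ξ_m(ε)` for small `ε > 0` (giving the factorization
`P_ε(X) = ε^M a_m ∏ (X - ξ_i(ε))`), and there exists `p ≥ 1` such that each `ε ↦ ξ_i(ε^p)`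
extends to a function meromorphic at `0`. -/
theorem stmt0 (m M : ℕ) (hm : 1 ≤ m) (c : ℕ → ℂ → ℂ)
    (hpoly : ∀ j : ℕ, j ≤ m → ∃ P : Polynomial ℂ, ∀ z : ℂ, c j z = P.eval z)
    (am : ℂ) (ham : am ≠ 0) (hlead : ∀ z : ℂ, c m z = z ^ M * am) :
    ∃ ε₀ > (0 : ℝ), ∃ ξ : Fin m → ℝ → ℂ,
      (∀ i : Fin m, ContinuousOn (ξ i) (Set.Ioo 0 ε₀)) ∧
      (∀ ε : ℝ, 0 < ε → ε < ε₀ → ∀ X : ℂ,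
        (∑ j ∈ Finset.range (m + 1), c j (ε : ℂ) * X ^ j)
          = (ε : ℂ) ^ M * am * ∏ i : Fin m, (X - ξ i ε)) ∧
      ∃ p : ℕ, 1 ≤ p ∧ ∀ i : Fin m, ∃ F : ℂ → ℂ, MeromorphicAtZero F ∧
        ∃ ε₁ > (0 : ℝ), ∀ ε : ℝ, 0 < ε → ε < ε₁ → F (ε : ℂ) = ξ i (ε ^ p) := by
  classical
  have hban : ∀ j, j < m →
      AnalyticAt ℂ (fun t : ℂ => c j t * t ^ (M * (m - j - 1)) * am⁻¹) 0 := by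
    intro j hj
    obtain ⟨P, hP⟩ := hpoly j (le_of_lt hj)
    have hcj : AnalyticAt ℂ (c j) 0 := by
      have heq : c j = fun z => P.eval z := funext hP
      rw [heq]; exact poly_analyticAt P 0
    exact (hcj.mul (analyticAt_pow' _ 0)).mul analyticAt_const
  obtain ⟨p, hp1, h, hh, hev⟩ := puiseux_core m
    (fun j t => c j t * t ^ (M * (m - j - 1)) * am⁻¹) hban
  have hhe : ∀ᶠ z in nhds (0 : ℂ), ∀ i ∈ Finset.range m, AnalyticAt ℂ (h i) z :=
    (Filter.eventually_all_finset _).mpr fun i hi =>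
      (hh i (Finset.mem_range.mp hi)).eventually_analyticAt
  have hcomb := hev.and hhe
  rw [Metric.eventually_nhds_iff] at hcomb
  obtain ⟨r, hr, hball⟩ := hcomb
  have hpne : p ≠ 0 := by omega
  set rt : ℝ → ℝ := fun ε => ε ^ ((p : ℝ)⁻¹) with hrt
  set xi : ℕ → ℝ → ℂ := fun i ε => h i (((rt ε : ℝ) : ℂ)) / (ε : ℂ) ^ M with hxi
  have hrtlt : ∀ ε : ℝ, 0 < ε → ε < r ^ p → rt ε < r := by
    intro ε hε0 hεr
    have h1 := Real.rpow_lt_rpow (le_of_lt hε0) hεr (by positivity : (0:ℝ) < (p:ℝ)⁻¹)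
    rwa [Real.pow_rpow_inv_natCast (le_of_lt hr) hpne] at h1
  have hrtpos : ∀ ε : ℝ, 0 < ε → 0 < rt ε := fun ε hε0 => Real.rpow_pos_of_pos hε0 _
  have hdistrt : ∀ ε : ℝ, 0 < ε → ε < r ^ p → dist (((rt ε : ℝ) : ℂ)) 0 < r := by
    intro ε hε0 hεr
    rw [dist_zero_right, Complex.norm_real, Real.norm_eq_abs,
      abs_of_pos (hrtpos ε hε0)]
    exact hrtlt ε hε0 hεr
  refine ⟨r ^ p, pow_pos hr p, fun i => xi (i : ℕ), ?_, ?_, ?_⟩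
  · -- continuity
    intro i ε hε
    obtain ⟨hε0, hεr⟩ := hε
    apply ContinuousAt.continuousWithinAt
    have hanal : AnalyticAt ℂ (h (i : ℕ)) (((rt ε : ℝ) : ℂ)) :=
      (hball (hdistrt ε hε0 hεr)).2 (i : ℕ) (Finset.mem_range.mpr i.isLt)
    have hrtc : ContinuousAt rt ε := by
      rw [hrt]
      exact Real.continuousAt_rpow_const ε _ (Or.inl (ne_of_gt hε0))
    have hoc : ContinuousAt (fun x : ℝ => ((x : ℝ) : ℂ)) (rt ε) :=
      Complex.continuous_ofReal.continuousAt
    have hnum : ContinuousAt (fun ε : ℝ => h (i : ℕ) (((rt ε : ℝ) : ℂ))) ε :=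
      ContinuousAt.comp (g := h (i : ℕ)) (f := fun ε : ℝ => ((rt ε : ℝ) : ℂ))
        hanal.continuousAt
        (ContinuousAt.comp (g := fun x : ℝ => ((x : ℝ) : ℂ)) (f := rt) hoc hrtc)
    have hden : ContinuousAt (fun ε : ℝ => ((ε : ℝ) : ℂ) ^ M) ε :=
      ((Complex.continuous_ofReal.pow M)).continuousAt
    have hdenne : ((ε : ℝ) : ℂ) ^ M ≠ 0 :=
      pow_ne_zero _ (Complex.ofReal_ne_zero.mpr (ne_of_gt hε0))
    simp only [hxi]
    exact hnum.div hden hdenne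
  · -- factorization
    intro ε hε0 hεr X
    have hdist := hdistrt ε hε0 hεr
    have hzne : (((rt ε : ℝ) : ℂ)) ≠ 0 :=
      Complex.ofReal_ne_zero.mpr (ne_of_gt (hrtpos ε hε0))
    have hid := (hball hdist).1 hzne
    have hzp : (((rt ε : ℝ) : ℂ)) ^ p = ((ε : ℝ) : ℂ) := by
      rw [← Complex.ofReal_pow]
      norm_cast
      exact Real.rpow_inv_natCast_pow (le_of_lt hε0) hpne
    set u : ℂ := ((ε : ℝ) : ℂ) with hu
    set E : ℂ := u ^ M with hE
    have hune : u ≠ 0 := Complex.ofReal_ne_zero.mpr (ne_of_gt hε0)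
    have hEne : E ≠ 0 := pow_ne_zero _ hune
    have hEm : (E⁻¹) ^ m * E ^ m = 1 := by
      rw [← mul_pow, inv_mul_cancel₀ hEne, one_pow]
    have hidE := hid (E * X)
    rw [hzp] at hidE
    have hprod : ∏ i : Fin m, (X - xi (i : ℕ) ε)
        = (E⁻¹) ^ m * ∏ i ∈ Finset.range m, (E * X - h i (((rt ε : ℝ) : ℂ))) := by
      rw [Fin.prod_univ_eq_prod_range (fun i => X - xi i ε) m]
      rw [show (E⁻¹) ^ m = ∏ _i ∈ Finset.range m, E⁻¹ by
        rw [Finset.prod_const, Finset.card_range]]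
      rw [← Finset.prod_mul_distrib]
      apply Finset.prod_congr rfl
      intro i _
      simp only [hxi]
      rw [← hE]
      field_simp
      try ring
    rw [hprod, ← hidE]
    rw [Finset.sum_range_succ, hlead]
    rw [mul_add ((E⁻¹) ^ m), mul_add (u ^ M * am), Finset.mul_sum, Finset.mul_sum]
    rw [add_comm (∑ j ∈ Finset.range m, c j u * X ^ j)]
    congr 1
    · rw [mul_pow E X m]
      calc u ^ M * am * X ^ m
          = (u ^ M * am * X ^ m) * ((E⁻¹) ^ m * E ^ m) := by rw [hEm, mul_one]
        _ = u ^ M * am * ((E⁻¹) ^ m * (E ^ m * X ^ m)) := by ring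
    · apply Finset.sum_congr rfl
      intro j hj
      have hj' : j < m := Finset.mem_range.mp hj
      rw [mul_pow E X j]
      have hpows : u ^ M * (u ^ (M * (m - j - 1)) * E ^ j) = E ^ m := by
        rw [hE, ← pow_mul, ← pow_mul, ← pow_add, ← pow_add]
        congr 1
        calc M + (M * (m - j - 1) + M * j) = M * (1 + (m - j - 1) + j) := by ring
          _ = M * m := by
              congr 1
              omega
      calc c j u * X ^ j
          = (c j u * X ^ j) * (am⁻¹ * am) * ((E⁻¹) ^ m * E ^ m) := by
            rw [inv_mul_cancel₀ ham, hEm]; ring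
        _ = (c j u * X ^ j) * (am⁻¹ * am) * ((E⁻¹) ^ m
              * (u ^ M * (u ^ (M * (m - j - 1)) * E ^ j))) := by rw [hpows]
        _ = u ^ M * am * ((E⁻¹) ^ m * (c j u * u ^ (M * (m - j - 1)) * am⁻¹
              * (E ^ j * X ^ j))) := by ring
  · -- meromorphy
    refine ⟨p, hp1, ?_⟩
    intro i
    refine ⟨fun ζ => h (i : ℕ) ζ / ζ ^ (p * M), ?_, 1, one_pos, ?_⟩
    · refine ⟨r, hr, ?_, p * M, h (i : ℕ), ?_, ?_⟩
      · intro ζ hζne hζr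
        have hζan : AnalyticAt ℂ (h (i : ℕ)) ζ := by
          apply (hball ?_).2 (i : ℕ) (Finset.mem_range.mpr i.isLt)
          rwa [dist_zero_right]
        exact (hζan.differentiableAt).div (differentiableAt_pow _) (pow_ne_zero _ hζne)
      · intro ζ hζr
        have hζan : AnalyticAt ℂ (h (i : ℕ)) ζ := by
          apply (hball ?_).2 (i : ℕ) (Finset.mem_range.mpr i.isLt)
          rwa [dist_zero_right]
        exact hζan.differentiableAt
      · intro ζ hζne hζr
        field_simp
        try ring
    · intro ε hε0 hε1
      have h1 : rt (ε ^ p) = ε := by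
        rw [hrt]
        exact Real.pow_rpow_inv_natCast (le_of_lt hε0) hpne
      simp only [hxi, h1]
      rw [show ((ε ^ p : ℝ) : ℂ) ^ M = ((ε : ℝ) : ℂ) ^ (p * M) by
        push_cast; rw [← pow_mul]]

end Final
end

section
/- Let m ≥ 1 and M ∈ ℕ, let c₀, …, c_m : ℂ → ℂ be polynomial functions of ε with c_m(ε) = ε^M · a_m for a nonzero constant a_m ∈ ℂ, and for ε > 0 set P_ε(X) = Σ_{j=0}^m c_j(ε) X^j. Let ξ₁, …, ξ_m : (0, ε₀) → ℂ be continuous functions giving the roots of P_ε with multiplicity, such that for some p ∈ ℕ, p ≥ 1, each ε ↦ ξ_i(ε^p) extends meromorphically at 0. Then for every i, exactly one of the following two possibilities occurs: (1) ξ_i(ε) converges to a limit in ℂ as ε → 0⁺; (2) there exists a unique positive rational number p_i such that ε^{p_i} · ξ_i(ε) converges, as ε → 0⁺, to a nonzero limit in ℂ. -/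
open Filter Topology

private lemma tendsto_rpow_zero' {r : ℝ} (hr : 0 < r) :
    Tendsto (fun t : ℝ => t ^ r) (𝓝[>] (0:ℝ)) (𝓝 0) := by
  have h := (Real.continuousAt_rpow_const 0 r (Or.inr hr.le)).tendsto
  rw [Real.zero_rpow hr.ne'] at h
  exact h.mono_left nhdsWithin_le_nhds

private lemma tendsto_coe_rpow_zero' {r : ℝ} (hr : 0 < r) :
    Tendsto (fun t : ℝ => ((t ^ r : ℝ) : ℂ)) (𝓝[>] (0:ℝ)) (𝓝 0) := by
  have := (Complex.continuous_ofReal.tendsto 0).comp (tendsto_rpow_zero' hr)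
  simpa [Function.comp_def] using this

private lemma exp_unique_aux' {f : ℝ → ℂ} {r s : ℝ} (hrs : r < s) {L L' : ℂ}
    (h1 : Tendsto (fun t : ℝ => ((t ^ r : ℝ):ℂ) * f t) (𝓝[>] (0:ℝ)) (𝓝 L))
    (h2 : Tendsto (fun t : ℝ => ((t ^ s : ℝ):ℂ) * f t) (𝓝[>] (0:ℝ)) (𝓝 L')) :
    L' = 0 := by
  have hev : ∀ᶠ t in 𝓝[>] (0:ℝ),
      ((t^(s-r):ℝ):ℂ) * (((t^r:ℝ):ℂ) * f t) = ((t^s:ℝ):ℂ) * f t := by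
    filter_upwards [self_mem_nhdsWithin] with t ht
    have h : (t:ℝ)^(s-r) * t^r = t^s := by
      rw [← Real.rpow_add ht]; ring_nf
    rw [← mul_assoc, ← Complex.ofReal_mul, h]
  have h3 := (tendsto_coe_rpow_zero' (by linarith : (0:ℝ) < s - r)).mul h1
  rw [zero_mul] at h3
  exact tendsto_nhds_unique h2 (h3.congr' hev)

/-- Dichotomy for the roots of a singularly perturbed polynomial
`P_ε(X) = Σ_{j=0}^m c_j(ε) X^j` with leading coefficient `ε^M a_m`, `a_m ≠ 0`: if the roots
`ξ₁(ε), …, ξ_m(ε)` are continuous and `ε ↦ ξ_i(ε^p)` extends meromorphically at `0` for some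
`p ≥ 1`, then for each `i` exactly one of the following holds: (1) `ξ_i(ε)` has a limit as
`ε → 0⁺`; (2) there is a unique positive rational `p_i` such that `ε^{p_i} ξ_i(ε)` has a
nonzero limit as `ε → 0⁺`. -/
theorem stmt1 (m M : ℕ) (hm : 1 ≤ m) (c : ℕ → ℂ → ℂ)
    (hpoly : ∀ j : ℕ, j ≤ m → ∃ P : Polynomial ℂ, ∀ z : ℂ, c j z = P.eval z)
    (am : ℂ) (ham : am ≠ 0) (hlead : ∀ z : ℂ, c m z = z ^ M * am)
    (ε₀ : ℝ) (hε₀ : 0 < ε₀) (ξ : Fin m → ℝ → ℂ)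
    (hcont : ∀ i : Fin m, ContinuousOn (ξ i) (Set.Ioo 0 ε₀))
    (hfact : ∀ ε : ℝ, 0 < ε → ε < ε₀ → ∀ X : ℂ,
      (∑ j ∈ Finset.range (m + 1), c j (ε : ℂ) * X ^ j)
        = (ε : ℂ) ^ M * am * ∏ i : Fin m, (X - ξ i ε))
    (p : ℕ) (hp : 1 ≤ p)
    (hmero : ∀ i : Fin m, ∃ F : ℂ → ℂ, MeromorphicAtZero F ∧
      ∃ ε₁ > (0 : ℝ), ∀ ε : ℝ, 0 < ε → ε < ε₁ → F (ε : ℂ) = ξ i (ε ^ p)) :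
    ∀ i : Fin m, Xor'
      (∃ L : ℂ, Tendsto (ξ i) (𝓝[>] (0 : ℝ)) (𝓝 L))
      (∃! pi : ℚ, 0 < pi ∧ ∃ L : ℂ, L ≠ 0 ∧
        Tendsto (fun ε : ℝ => ((ε ^ (pi : ℝ) : ℝ) : ℂ) * ξ i ε) (𝓝[>] (0 : ℝ)) (𝓝 L)) := by
  intro i
  obtain ⟨F, ⟨ρ, hρ, hFd, k, G, hGd, hGeq⟩, ε₁, hε₁, hFeq⟩ := hmero i
  have hppos : (0:ℝ) < (p:ℝ) := by exact_mod_cast hp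
  -- the p-th root map
  set φ : ℝ → ℝ := fun t => t ^ ((p:ℝ)⁻¹) with hφdef
  have hφpos : ∀ t : ℝ, 0 < t → 0 < φ t := fun t ht => Real.rpow_pos_of_pos ht _
  have hφtend : Tendsto φ (𝓝[>] (0:ℝ)) (𝓝[>] (0:ℝ)) := by
    apply tendsto_nhdsWithin_of_tendsto_nhds_of_eventually_within
    · exact tendsto_rpow_zero' (by positivity)
    · filter_upwards [self_mem_nhdsWithin] with t ht using hφpos t ht
  have hφpow : ∀ t : ℝ, 0 < t → φ t ^ p = t := by
    intro t ht
    rw [hφdef]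
    rw [← Real.rpow_natCast (t ^ ((p:ℝ)⁻¹)) p, ← Real.rpow_mul ht.le,
      inv_mul_cancel₀ hppos.ne', Real.rpow_one]
  have hξF : ∀ᶠ t in 𝓝[>] (0:ℝ), ξ i t = F ((φ t : ℝ) : ℂ) := by
    filter_upwards [hφtend.eventually (Ioo_mem_nhdsGT_of_mem ⟨le_refl (0:ℝ), hε₁⟩),
      self_mem_nhdsWithin] with t hmem ht
    rw [hFeq _ hmem.1 hmem.2, hφpow t ht]
  have hcoe : Tendsto (fun t : ℝ => ((φ t : ℝ) : ℂ)) (𝓝[>] (0:ℝ)) (𝓝[≠] (0:ℂ)) := by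
    apply tendsto_nhdsWithin_of_tendsto_nhds_of_eventually_within
    · have := (Complex.continuous_ofReal.tendsto 0).comp (hφtend.mono_right nhdsWithin_le_nhds)
      simpa [Function.comp_def] using this
    · filter_upwards [self_mem_nhdsWithin] with t ht
      simp only [Set.mem_compl_iff, Set.mem_singleton_iff]
      exact_mod_cast (hφpos t ht).ne'
  -- F is meromorphic at 0 in the Mathlib sense
  have hball : Metric.ball (0:ℂ) ρ ∈ 𝓝 (0:ℂ) := Metric.ball_mem_nhds 0 hρ
  have hGan : AnalyticAt ℂ (fun z : ℂ => z * G z) 0 := by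
    have hd : DifferentiableOn ℂ (fun z : ℂ => z * G z) (Metric.ball 0 ρ) := by
      intro z hz
      have hz' : ‖z‖ < ρ := by
        simpa using mem_ball_zero_iff.mp hz
      exact (differentiableAt_id.mul (hGd z hz')).differentiableWithinAt
    exact hd.analyticAt hball
  have hF : MeromorphicAt F 0 := by
    refine ⟨k + 1, ?_⟩
    apply hGan.congr
    filter_upwards [hball] with z hz
    have hz' : ‖z‖ < ρ := by
      simpa using mem_ball_zero_iff.mp hz
    rcases eq_or_ne z 0 with rfl | hz0
    · simp
    · simp only [sub_zero, smul_eq_mul]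
      rw [hGeq z hz0 hz', pow_succ']
      ring
  -- generic exclusion of case 2 when case 1 holds
  have noRight : ∀ L : ℂ, Tendsto (ξ i) (𝓝[>] (0:ℝ)) (𝓝 L) →
      ¬ (∃! pi : ℚ, 0 < pi ∧ ∃ L' : ℂ, L' ≠ 0 ∧
        Tendsto (fun ε : ℝ => ((ε ^ (pi:ℝ) : ℝ) : ℂ) * ξ i ε) (𝓝[>] (0:ℝ)) (𝓝 L')) := by
    rintro L hL ⟨pi, ⟨hpi, L', hL', hT⟩, -⟩
    have h0 := (tendsto_coe_rpow_zero' (by exact_mod_cast hpi : (0:ℝ) < (pi:ℝ))).mul hL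
    rw [zero_mul] at h0
    exact hL' (tendsto_nhds_unique hT h0)
  by_cases htop : meromorphicOrderAt F 0 = ⊤
  · -- F vanishes identically near 0
    have hF0 := meromorphicOrderAt_eq_top_iff.mp htop
    have hz : ∀ᶠ t in 𝓝[>] (0:ℝ), ξ i t = 0 := by
      filter_upwards [hξF, hcoe.eventually hF0] with t h1 h2
      rw [h1, h2]
    have hL : Tendsto (ξ i) (𝓝[>] (0:ℝ)) (𝓝 0) :=
      Tendsto.congr' (hz.mono fun _ h => h.symm) tendsto_const_nhds
    exact Or.inl ⟨⟨0, hL⟩, noRight 0 hL⟩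
  · obtain ⟨n, hn⟩ := WithTop.ne_top_iff_exists.mp htop
    obtain ⟨g, hgan, hg0, hgev⟩ := (meromorphicOrderAt_eq_int_iff (n := n) hF).mp hn.symm
    have key : ∀ᶠ t in 𝓝[>] (0:ℝ),
        ξ i t = ((φ t : ℝ):ℂ) ^ n * g ((φ t : ℝ):ℂ) := by
      filter_upwards [hξF, hcoe.eventually hgev] with t h1 h2
      rw [h1, h2]; simp [smul_eq_mul]
    rcases le_or_gt 0 n with hn0 | hn0
    · -- nonnegative order: ξ i converges
      set n' : ℕ := n.toNat with hn'def
      have hn' : (n' : ℤ) = n := Int.toNat_of_nonneg hn0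
      have key' : ∀ᶠ t in 𝓝[>] (0:ℝ),
          ξ i t = ((φ t : ℝ):ℂ) ^ n' * g ((φ t : ℝ):ℂ) := by
        filter_upwards [key] with t hk
        rw [hk, ← hn', zpow_natCast]
      have hcont0 : Tendsto (fun z : ℂ => z ^ n' * g z) (𝓝 0) (𝓝 ((0:ℂ) ^ n' * g 0)) :=
        ((continuous_pow n').continuousAt (x := (0:ℂ))).mul hgan.continuousAt
      have hL : Tendsto (ξ i) (𝓝[>] (0:ℝ)) (𝓝 ((0:ℂ) ^ n' * g 0)) :=
        Tendsto.congr' (key'.mono fun _ h => h.symm) (hcont0.comp (hcoe.mono_right nhdsWithin_le_nhds))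
      exact Or.inl ⟨⟨_, hL⟩, noRight _ hL⟩
    · -- negative order
      set q : ℕ := (-n).toNat with hqdef
      have hq : (q : ℤ) = -n := Int.toNat_of_nonneg (by omega)
      have hqpos : 0 < q := by omega
      set pi : ℚ := (q : ℚ) / (p : ℚ) with hpidef
      have hpi : 0 < pi := by
        apply div_pos
        · exact_mod_cast hqpos
        · exact_mod_cast hp
      have hpiR : ((pi : ℚ) : ℝ) = (p:ℝ)⁻¹ * (q:ℝ) := by
        rw [hpidef]; push_cast; ring
      have ev2 : ∀ᶠ t in 𝓝[>] (0:ℝ),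
          ((t ^ ((pi:ℚ):ℝ) : ℝ) : ℂ) * ξ i t = g ((φ t : ℝ):ℂ) := by
        filter_upwards [key, self_mem_nhdsWithin] with t hk ht
        have ht0 : (0:ℝ) < t := ht
        have hφt : (0:ℝ) < φ t := hφpos t ht0
        have hr : t ^ ((pi:ℚ):ℝ) = φ t ^ q := by
          rw [hφdef, ← Real.rpow_natCast (t ^ ((p:ℝ)⁻¹)) q, ← Real.rpow_mul ht0.le, hpiR]
        have hzne : ((φ t : ℝ):ℂ) ≠ 0 := by exact_mod_cast hφt.ne'
        rw [hr, hk, Complex.ofReal_pow, ← zpow_natCast ((φ t : ℝ):ℂ) q, ← mul_assoc,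
          ← zpow_add₀ hzne]
        have : (q:ℤ) + n = 0 := by omega
        rw [this, zpow_zero, one_mul]
      have hgL : Tendsto (fun t : ℝ => ((t ^ ((pi:ℚ):ℝ) : ℝ) : ℂ) * ξ i t)
          (𝓝[>] (0:ℝ)) (𝓝 (g 0)) := by
        refine Tendsto.congr' (ev2.mono fun _ h => h.symm) ?_
        have := hgan.continuousAt.tendsto.comp (hcoe.mono_right nhdsWithin_le_nhds)
        simpa [Function.comp_def] using this
      refine Or.inr ⟨⟨pi, ⟨hpi, g 0, hg0, hgL⟩, ?_⟩, ?_⟩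
      · -- uniqueness
        rintro pi' ⟨hpi', L', hL', hT'⟩
        rcases lt_trichotomy pi' pi with h | h | h
        · exact absurd (exp_unique_aux' (by exact_mod_cast h) hT' hgL) hg0
        · exact h
        · exact absurd (exp_unique_aux' (by exact_mod_cast h) hgL hT') hL'
      · -- case 1 fails
        rintro ⟨L, hL⟩
        have h0 := (tendsto_coe_rpow_zero' (by exact_mod_cast hpi : (0:ℝ) < (pi:ℝ))).mul hL
        rw [zero_mul] at h0
        exact hg0 (tendsto_nhds_unique hgL h0)
end

section
/- Let A, c ∈ ℂ with A ≠ 0 and c ≠ 0, and let q₀, q₁, q₂, q₃ ∈ ℂ. For ε > 0 consider the quartic polynomial P_ε(X) = A X⁴ + q₃ X³ + q₂ X² + q₁ X + q₀ + c ε^{−1}. Then there exist ε₀ > 0 and functions X₀, X₁, X₂, X₃ : (0, ε₀) → ℂ enumerating the four roots of P_ε counted with multiplicity such that, if ω₀, ω₁, ω₂, ω₃ denote the four complex fourth roots of −c/A, then ε^{1/4} X_l(ε) → ω_l as ε → 0⁺ for l = 0, 1, 2, 3. In particular all four roots blow up at the same rate ε^{−1/4}. -/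
open Filter Topology

open Polynomial

lemma exists_root_quartic (a b c d : ℂ) : ∃ r : ℂ, r^4 + a*r^3 + b*r^2 + c*r + d = 0 := by
  obtain ⟨z, hz⟩ := IsAlgClosed.exists_root (k := ℂ) (X^4 + C a*X^3 + C b*X^2 + C c*X + C d)
    (by rw [show (X^4 + C a*X^3 + C b*X^2 + C c*X + C d : ℂ[X]).degree = 4 from by compute_degree!]; norm_num)
  exact ⟨z, by simpa [Polynomial.IsRoot] using hz⟩

lemma exists_root_cubic (a b c : ℂ) : ∃ r : ℂ, r^3 + a*r^2 + b*r + c = 0 := by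
  obtain ⟨z, hz⟩ := IsAlgClosed.exists_root (k := ℂ) (X^3 + C a*X^2 + C b*X + C c)
    (by rw [show (X^3 + C a*X^2 + C b*X + C c : ℂ[X]).degree = 3 from by compute_degree!]; norm_num)
  exact ⟨z, by simpa [Polynomial.IsRoot] using hz⟩

lemma quadratic_factor (a b : ℂ) : ∃ r₁ r₂ : ℂ, ∀ z : ℂ, z^2 + a*z + b = (z - r₁) * (z - r₂) := by
  obtain ⟨s, hs⟩ := IsAlgClosed.exists_pow_nat_eq (a^2 - 4*b) (n := 2) (by norm_num)
  exact ⟨(-a+s)/2, (-a-s)/2, fun z => by linear_combination (1/4 : ℂ) * hs⟩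

lemma quartic_factor (a b c d : ℂ) :
    ∃ y : Fin 4 → ℂ, ∀ z : ℂ, z^4 + a*z^3 + b*z^2 + c*z + d = ∏ i, (z - y i) := by
  obtain ⟨r, hr⟩ := exists_root_quartic a b c d
  obtain ⟨r', hr'⟩ := exists_root_cubic (a+r) (b+r*(a+r)) (c+r*(b+r*(a+r)))
  obtain ⟨r₁, r₂, h12⟩ := quadratic_factor ((a+r)+r') ((b+r*(a+r)) + r'*((a+r)+r'))
  refine ⟨![r, r', r₁, r₂], fun z => ?_⟩
  rw [Fin.prod_univ_four]
  simp only [Matrix.cons_val_zero, Matrix.cons_val_one, Matrix.head_cons,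
    Matrix.cons_val_two, Matrix.tail_cons, Matrix.cons_val_three]
  have h := h12 z
  linear_combination hr + hr' * (z - r) + h * ((z-r)*(z-r'))

lemma root_bound (a₃ a₂ a₁ a₀ y : ℂ) (h : y^4 + a₃*y^3 + a₂*y^2 + a₁*y + a₀ = 0) :
    ‖y‖ ≤ max 1 (‖a₃‖ + ‖a₂‖ + ‖a₁‖ + ‖a₀‖) := by
  by_contra hy
  push_neg at hy
  have h1 : 1 < ‖y‖ := lt_of_le_of_lt (le_max_left _ _) hy
  have hS : ‖a₃‖ + ‖a₂‖ + ‖a₁‖ + ‖a₀‖ < ‖y‖ := lt_of_le_of_lt (le_max_right _ _) hy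
  have he : y^4 = -(a₃*y^3 + a₂*y^2 + a₁*y + a₀) := by linear_combination h
  have hn : ‖y‖^4 ≤ ‖a₃‖*‖y‖^3 + ‖a₂‖*‖y‖^2 + ‖a₁‖*‖y‖ + ‖a₀‖ := by
    calc ‖y‖^4 = ‖y^4‖ := by rw [norm_pow]
    _ = ‖a₃*y^3 + a₂*y^2 + a₁*y + a₀‖ := by rw [he, norm_neg]
    _ ≤ ‖a₃*y^3 + a₂*y^2 + a₁*y‖ + ‖a₀‖ := norm_add_le _ _
    _ ≤ ‖a₃*y^3 + a₂*y^2‖ + ‖a₁*y‖ + ‖a₀‖ := by gcongr; exact norm_add_le _ _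
    _ ≤ ‖a₃*y^3‖ + ‖a₂*y^2‖ + ‖a₁*y‖ + ‖a₀‖ := by gcongr ?_ + _ + _; exact norm_add_le _ _
    _ = ‖a₃‖*‖y‖^3 + ‖a₂‖*‖y‖^2 + ‖a₁‖*‖y‖ + ‖a₀‖ := by
        simp [norm_mul, norm_pow]
  have h2 : ‖y‖^2 ≤ ‖y‖^3 := by nlinarith
  have h3 : ‖y‖ ≤ ‖y‖^3 := by nlinarith
  have h4 : (1:ℝ) ≤ ‖y‖^3 := by nlinarith
  nlinarith [norm_nonneg y, norm_nonneg a₃, norm_nonneg a₂, norm_nonneg a₁, norm_nonneg a₀]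

lemma norm_add_four_le (a b c d : ℂ) : ‖a + b + c + d‖ ≤ ‖a‖ + ‖b‖ + ‖c‖ + ‖d‖ := by
  calc ‖a + b + c + d‖ ≤ ‖a + b + c‖ + ‖d‖ := norm_add_le _ _
  _ ≤ ‖a + b‖ + ‖c‖ + ‖d‖ := by gcongr ?_ + _; exact norm_add_le _ _
  _ ≤ ‖a‖ + ‖b‖ + ‖c‖ + ‖d‖ := by gcongr ?_ + _ + _; exact norm_add_le _ _

lemma cubic_bound (q₃ q₂ q₁ q₀ w : ℂ) (δ : ℝ) (hδ0 : 0 ≤ δ) (hδ1 : δ ≤ 1)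
    (B : ℝ) (hB : 1 ≤ B) (hw : ‖w‖ ≤ B) :
    ‖q₃*w^3 + (δ:ℂ)*q₂*w^2 + (δ:ℂ)^2*q₁*w + (δ:ℂ)^3*q₀‖
      ≤ ‖q₃‖*B^3 + ‖q₂‖*B^2 + ‖q₁‖*B + ‖q₀‖ := by
  have h0 : (0:ℝ) ≤ ‖w‖ := norm_nonneg _
  have hδn : ‖((δ:ℝ):ℂ)‖ = δ := by
    rw [Complex.norm_real]; exact abs_of_nonneg hδ0
  calc ‖q₃*w^3 + (δ:ℂ)*q₂*w^2 + (δ:ℂ)^2*q₁*w + (δ:ℂ)^3*q₀‖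
      ≤ ‖q₃*w^3‖ + ‖(δ:ℂ)*q₂*w^2‖ + ‖(δ:ℂ)^2*q₁*w‖ + ‖(δ:ℂ)^3*q₀‖ := norm_add_four_le _ _ _ _
    _ = ‖q₃‖*‖w‖^3 + δ*(‖q₂‖*‖w‖^2) + δ^2*(‖q₁‖*‖w‖) + δ^3*‖q₀‖ := by
        simp [norm_mul, norm_pow, hδn, abs_of_nonneg hδ0]; ring
    _ ≤ ‖q₃‖*B^3 + δ*(‖q₂‖*B^2) + δ^2*(‖q₁‖*B) + δ^3*‖q₀‖ := by gcongr
    _ ≤ ‖q₃‖*B^3 + 1*(‖q₂‖*B^2) + 1*(‖q₁‖*B) + 1*‖q₀‖ := by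
        have hδ2 : δ^2 ≤ 1 := pow_le_one₀ hδ0 hδ1
        have hδ3 : δ^3 ≤ 1 := pow_le_one₀ hδ0 hδ1
        gcongr
    _ = ‖q₃‖*B^3 + ‖q₂‖*B^2 + ‖q₁‖*B + ‖q₀‖ := by ring
lemma four_prod_le (r a b c d : ℝ) (hr : 0 ≤ r) (ha : r ≤ a) (hb : r ≤ b)
    (hc : r ≤ c) (hd : r ≤ d) : r^4 ≤ a*b*c*d := by
  have h1 : r*r ≤ a*b := mul_le_mul ha hb hr (le_trans hr ha)
  have hab : (0:ℝ) ≤ a*b := mul_nonneg (le_trans hr ha) (le_trans hr hb)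
  have h2 : r*r*r ≤ a*b*c := mul_le_mul h1 hc hr hab
  have h3 : r*r*r*r ≤ a*b*c*d := mul_le_mul h2 hd hr (mul_nonneg hab (le_trans hr hc))
  calc r^4 = r*r*r*r := by ring
  _ ≤ _ := h3

set_option maxHeartbeats 1000000 in
lemma keyloc (A c q₀ q₁ q₂ q₃ : ℂ) (hA : A ≠ 0)
    (ω : Fin 4 → ℂ) (hω : ∀ z : ℂ, z^4 + c/A = ∏ l, (z - ω l))
    (hω4 : ∀ l, ω l ^ 4 = -c/A)
    (d : ℝ) (hd : 0 < d) (hsep : ∀ a b : Fin 4, a ≠ b → d ≤ ‖ω a - ω b‖) :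
    ∀ r : ℝ, 0 < r → r ≤ d/4 → ∃ δ₁ > (0:ℝ), δ₁ ≤ 1 ∧ ∀ δ : ℝ, 0 < δ → δ < δ₁ →
      ∀ y : Fin 4 → ℂ,
      (∀ z : ℂ, z^4 + ((δ:ℂ)*q₃/A)*z^3 + ((δ:ℂ)^2*q₂/A)*z^2 + ((δ:ℂ)^3*q₁/A)*z
          + (((δ:ℂ)^4*q₀+c)/A) = ∏ i, (z - y i)) →
      (∀ i, ∃ l, ‖y i - ω l‖ < r) ∧ (∀ l, ∃ i, ‖y i - ω l‖ < r) := by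
  intro r hr hr4
  have hAn : (0:ℝ) < ‖A‖ := norm_pos_iff.mpr hA
  set M : ℝ := max 1 ((‖q₃‖ + ‖q₂‖ + ‖q₁‖ + (‖q₀‖ + ‖c‖))/‖A‖) with hM
  have hM1 : (1:ℝ) ≤ M := le_max_left _ _
  set K : ℝ := (‖q₃‖*M^3 + ‖q₂‖*M^2 + ‖q₁‖*M + ‖q₀‖)/‖A‖ with hK
  have hK0 : 0 ≤ K := by positivity
  set W : ℝ := max 1 (‖c‖/‖A‖) with hW
  have hW1 : (1:ℝ) ≤ W := le_max_left _ _
  set K' : ℝ := (‖q₃‖*W^3 + ‖q₂‖*W^2 + ‖q₁‖*W + ‖q₀‖)/‖A‖ with hK'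
  have hK'0 : 0 ≤ K' := by positivity
  refine ⟨min 1 (min (r^4/(K+1)) ((3*d/4)^4/(K'+1))), by positivity, min_le_left _ _, ?_⟩
  intro δ hδ0 hδ1 y hfac
  have hδle1 : δ ≤ 1 := le_of_lt (lt_of_lt_of_le hδ1 (min_le_left _ _))
  have hδK : δ * (K+1) < r^4 := by
    have h1 : δ < r^4/(K+1) := lt_of_lt_of_le hδ1 (le_trans (min_le_right _ _) (min_le_left _ _))
    calc δ * (K+1) < (r^4/(K+1)) * (K+1) := by gcongr
    _ = r^4 := by field_simp
  have hδK' : δ * (K'+1) < (3*d/4)^4 := by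
    have h1 : δ < (3*d/4)^4/(K'+1) :=
      lt_of_lt_of_le hδ1 (le_trans (min_le_right _ _) (min_le_right _ _))
    calc δ * (K'+1) < ((3*d/4)^4/(K'+1)) * (K'+1) := by gcongr
    _ = (3*d/4)^4 := by field_simp
  have hδn : ‖((δ:ℝ):ℂ)‖ = δ := by rw [Complex.norm_real]; exact abs_of_nonneg hδ0.le
  have hroot : ∀ i, (y i)^4 + ((δ:ℂ)*q₃/A)*(y i)^3 + ((δ:ℂ)^2*q₂/A)*(y i)^2
      + ((δ:ℂ)^3*q₁/A)*(y i) + (((δ:ℂ)^4*q₀+c)/A) = 0 := by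
    intro i
    rw [hfac (y i)]
    exact Finset.prod_eq_zero (Finset.mem_univ i) (sub_self _)
  have hyM : ∀ i, ‖y i‖ ≤ M := by
    intro i
    refine le_trans (root_bound _ _ _ _ _ (hroot i)) (max_le hM1 ?_)
    have h2 : δ^2 ≤ 1 := pow_le_one₀ hδ0.le hδle1
    have h3 : δ^3 ≤ 1 := pow_le_one₀ hδ0.le hδle1
    have h4 : δ^4 ≤ 1 := pow_le_one₀ hδ0.le hδle1
    have e4 : ‖(δ:ℂ)^4*q₀+c‖ ≤ ‖q₀‖+‖c‖ := by
      refine le_trans (norm_add_le _ _) ?_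
      have e : ‖(δ:ℂ)^4*q₀‖ = δ^4*‖q₀‖ := by
        rw [norm_mul, norm_pow, hδn]
      rw [e]
      nlinarith [norm_nonneg q₀]
    have hfinal : ‖(δ:ℂ)*q₃/A‖ + ‖(δ:ℂ)^2*q₂/A‖ + ‖(δ:ℂ)^3*q₁/A‖ + ‖((δ:ℂ)^4*q₀+c)/A‖
        ≤ (‖q₃‖ + ‖q₂‖ + ‖q₁‖ + (‖q₀‖ + ‖c‖))/‖A‖ := by
      simp only [norm_div, norm_mul, norm_pow, hδn]
      rw [← add_div, ← add_div, ← add_div]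
      gcongr (?_ + ?_ + ?_ + ?_) / _ <;>
        nlinarith [norm_nonneg q₃, norm_nonneg q₂, norm_nonneg q₁, e4]
    exact le_trans hfinal (le_max_right _ _)
  constructor
  · -- claim A
    intro i
    by_contra hcon
    push_neg at hcon
    have heq : (y i)^4 + c/A
        = -((δ:ℂ) * (q₃*(y i)^3 + (δ:ℂ)*q₂*(y i)^2 + (δ:ℂ)^2*q₁*(y i) + (δ:ℂ)^3*q₀) / A) := by
      linear_combination hroot i
    have hnorm : ∏ l, ‖y i - ω l‖ ≤ δ * K := by
      calc ∏ l, ‖y i - ω l‖ = ‖∏ l, (y i - ω l)‖ := (norm_prod _ _).symm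
      _ = ‖(δ:ℂ) * (q₃*(y i)^3 + (δ:ℂ)*q₂*(y i)^2 + (δ:ℂ)^2*q₁*(y i) + (δ:ℂ)^3*q₀) / A‖ := by
          rw [← hω (y i), heq, norm_neg]
      _ = δ * ‖q₃*(y i)^3 + (δ:ℂ)*q₂*(y i)^2 + (δ:ℂ)^2*q₁*(y i) + (δ:ℂ)^3*q₀‖ / ‖A‖ := by
          rw [norm_div, norm_mul, hδn]
      _ ≤ δ * (‖q₃‖*M^3 + ‖q₂‖*M^2 + ‖q₁‖*M + ‖q₀‖) / ‖A‖ := by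
          gcongr
          exact cubic_bound q₃ q₂ q₁ q₀ (y i) δ hδ0.le hδle1 M hM1 (hyM i)
      _ = δ * K := by rw [hK]; ring
    have hge : r^4 ≤ ∏ l, ‖y i - ω l‖ := by
      rw [Fin.prod_univ_four]
      exact four_prod_le r _ _ _ _ hr.le (hcon 0) (hcon 1) (hcon 2) (hcon 3)
    have hKK : δ * K ≤ δ * (K+1) := by nlinarith
    linarith
  · -- claim B
    intro l
    by_contra hcon
    push_neg at hcon
    have claimA : ∀ i, ∃ l', ‖y i - ω l'‖ < r := by
      intro i
      by_contra hcon2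
      push_neg at hcon2
      have heq : (y i)^4 + c/A
          = -((δ:ℂ) * (q₃*(y i)^3 + (δ:ℂ)*q₂*(y i)^2 + (δ:ℂ)^2*q₁*(y i) + (δ:ℂ)^3*q₀) / A) := by
        linear_combination hroot i
      have hnorm : ∏ l', ‖y i - ω l'‖ ≤ δ * K := by
        calc ∏ l', ‖y i - ω l'‖ = ‖∏ l', (y i - ω l')‖ := (norm_prod _ _).symm
        _ = ‖(δ:ℂ) * (q₃*(y i)^3 + (δ:ℂ)*q₂*(y i)^2 + (δ:ℂ)^2*q₁*(y i) + (δ:ℂ)^3*q₀) / A‖ := by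
            rw [← hω (y i), heq, norm_neg]
        _ = δ * ‖q₃*(y i)^3 + (δ:ℂ)*q₂*(y i)^2 + (δ:ℂ)^2*q₁*(y i) + (δ:ℂ)^3*q₀‖ / ‖A‖ := by
            rw [norm_div, norm_mul, hδn]
        _ ≤ δ * (‖q₃‖*M^3 + ‖q₂‖*M^2 + ‖q₁‖*M + ‖q₀‖) / ‖A‖ := by
            gcongr
            exact cubic_bound q₃ q₂ q₁ q₀ (y i) δ hδ0.le hδle1 M hM1 (hyM i)
        _ = δ * K := by rw [hK]; ring
      have hge : r^4 ≤ ∏ l', ‖y i - ω l'‖ := by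
        rw [Fin.prod_univ_four]
        exact four_prod_le r _ _ _ _ hr.le (hcon2 0) (hcon2 1) (hcon2 2) (hcon2 3)
      have hKK : δ * K ≤ δ * (K+1) := by nlinarith
      linarith
    have hfar : ∀ i, 3*d/4 ≤ ‖ω l - y i‖ := by
      intro i
      obtain ⟨l', hl'⟩ := claimA i
      have hne : l' ≠ l := by
        rintro rfl
        exact absurd hl' (not_lt.mpr (hcon i))
      have hsep' := hsep l' l hne
      have htri : ‖ω l' - ω l‖ ≤ ‖ω l' - y i‖ + ‖y i - ω l‖ := by
        simpa [dist_eq_norm] using dist_triangle (ω l') (y i) (ω l)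
      have h1 : ‖ω l' - y i‖ = ‖y i - ω l'‖ := norm_sub_rev _ _
      have h2 : ‖ω l - y i‖ = ‖y i - ω l‖ := norm_sub_rev _ _
      rw [h2]
      rw [h1] at htri
      linarith
    have hωW : ‖ω l‖ ≤ W := by
      have hval : ‖ω l‖^4 = ‖c‖/‖A‖ := by
        rw [← norm_pow, hω4 l, norm_div, norm_neg]
      rcases le_or_gt ‖ω l‖ 1 with h|h
      · exact le_trans h hW1
      · refine le_trans ?_ (le_max_right 1 (‖c‖/‖A‖))
        have a1 : ‖ω l‖ ≤ ‖ω l‖^2 := by nlinarith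
        have a2 : ‖ω l‖^2 ≤ ‖ω l‖^4 := by nlinarith
        linarith
    have heq2 : (δ:ℂ)*(q₃*(ω l)^3 + (δ:ℂ)*q₂*(ω l)^2 + (δ:ℂ)^2*q₁*(ω l) + (δ:ℂ)^3*q₀)/A
        = ∏ i, (ω l - y i) := by
      linear_combination hfac (ω l) - hω4 l
    have hub : ‖∏ i, (ω l - y i)‖ ≤ δ * K' := by
      rw [← heq2]
      calc ‖(δ:ℂ)*(q₃*(ω l)^3 + (δ:ℂ)*q₂*(ω l)^2 + (δ:ℂ)^2*q₁*(ω l) + (δ:ℂ)^3*q₀)/A‖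
          = δ * ‖q₃*(ω l)^3 + (δ:ℂ)*q₂*(ω l)^2 + (δ:ℂ)^2*q₁*(ω l) + (δ:ℂ)^3*q₀‖ / ‖A‖ := by
            rw [norm_div, norm_mul, hδn]
      _ ≤ δ * (‖q₃‖*W^3 + ‖q₂‖*W^2 + ‖q₁‖*W + ‖q₀‖) / ‖A‖ := by
            gcongr
            exact cubic_bound q₃ q₂ q₁ q₀ (ω l) δ hδ0.le hδle1 W hW1 hωW
      _ = δ * K' := by rw [hK']; ring
    have hlb : (3*d/4)^4 ≤ ‖∏ i, (ω l - y i)‖ := by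
      rw [norm_prod, Fin.prod_univ_four]
      exact four_prod_le _ _ _ _ _ (by positivity) (hfar 0) (hfar 1) (hfar 2) (hfar 3)
    have hKK : δ * K' ≤ δ * (K'+1) := by nlinarith
    linarith


lemma one_le_norm_of_normSq (z : ℂ) (h : 1 ≤ Complex.normSq z) : 1 ≤ ‖z‖ := by
  have h1 := Complex.sq_norm z
  nlinarith [norm_nonneg z]


lemma selectperm (ω : Fin 4 → ℂ) (d : ℝ) (hd : 0 < d)
    (hsep : ∀ a b : Fin 4, a ≠ b → d ≤ ‖ω a - ω b‖) (y : Fin 4 → ℂ)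
    (hAc : ∀ i, ∃ l, ‖y i - ω l‖ < d/4) (hBc : ∀ l, ∃ i, ‖y i - ω l‖ < d/4) :
    ∃ σ : Equiv.Perm (Fin 4), (∀ l, ‖y (σ l) - ω l‖ < d/4) ∧
      ∀ i l, ‖y i - ω l‖ < d/4 → i = σ l := by
  choose τ hτ using hAc
  have huniq : ∀ i l, ‖y i - ω l‖ < d/4 → τ i = l := by
    intro i l h
    by_contra hne
    have hs := hsep (τ i) l hne
    have htri : ‖ω (τ i) - ω l‖ ≤ ‖y i - ω (τ i)‖ + ‖y i - ω l‖ := by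
      have h' := dist_triangle (ω (τ i)) (y i) (ω l)
      simp only [dist_eq_norm] at h'
      calc ‖ω (τ i) - ω l‖ ≤ ‖ω (τ i) - y i‖ + ‖y i - ω l‖ := h'
      _ = ‖y i - ω (τ i)‖ + ‖y i - ω l‖ := by rw [norm_sub_rev (ω (τ i))]
    linarith [hτ i]
  have hsurj : Function.Surjective τ := fun l => by
    obtain ⟨i, hi⟩ := hBc l
    exact ⟨i, huniq i l hi⟩
  have hbij : Function.Bijective τ := Finite.surjective_iff_bijective.mp hsurj
  let e := Equiv.ofBijective τ hbij
  refine ⟨e.symm, fun l => ?_, fun i l h => ?_⟩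
  · have h1 : τ (e.symm l) = l := e.apply_symm_apply l
    have h2 := hτ (e.symm l)
    rwa [h1] at h2
  · have h1 : e i = l := huniq i l h
    rw [← h1, Equiv.symm_apply_apply]

set_option maxHeartbeats 1000000 in
/-- Geostrophic degeneracy for the quasigeostrophic equation on a disc: all four roots of the
quartic `P_ε(X) = A X⁴ + q₃ X³ + q₂ X² + q₁ X + q₀ + c ε⁻¹` (with `A ≠ 0`, `c ≠ 0`) blow up
at the rate `ε^{-1/4}`: they can be enumerated with multiplicity as `X₀, …, X₃` so that, for
the four fourth roots `ω₀, …, ω₃` of `-c/A`, one has `ε^{1/4} X_l(ε) → ω_l`. -/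
theorem stmt16 (A c q₀ q₁ q₂ q₃ : ℂ) (hA : A ≠ 0) (hc : c ≠ 0) :
    ∃ ε₀ > (0 : ℝ), ∃ X : Fin 4 → ℝ → ℂ,
      (∀ ε : ℝ, 0 < ε → ε < ε₀ → ∀ z : ℂ,
        A * z ^ 4 + q₃ * z ^ 3 + q₂ * z ^ 2 + q₁ * z + q₀ + c * (ε : ℂ)⁻¹
          = A * ∏ i : Fin 4, (z - X i ε)) ∧
      ∃ ω : Fin 4 → ℂ, Function.Injective ω ∧ (∀ l, ω l ^ 4 = -c / A) ∧
        ∀ l : Fin 4,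
          Tendsto (fun ε : ℝ => ((ε ^ ((1 : ℝ) / 4) : ℝ) : ℂ) * X l ε)
            (𝓝[>] (0 : ℝ)) (𝓝 (ω l)) := by
  -- the fourth roots of -c/A
  obtain ⟨ω₀, hω₀⟩ := IsAlgClosed.exists_pow_nat_eq (-c/A) (n := 4) (by norm_num)
  have hs0 : (-c/A) ≠ 0 := div_ne_zero (neg_ne_zero.mpr hc) hA
  have hω₀n : ω₀ ≠ 0 := by
    rintro rfl
    exact hs0 (by simpa using hω₀.symm)
  set ω : Fin 4 → ℂ := fun l => ω₀ * Complex.I ^ (l:ℕ) with hωdef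
  have hI2 : Complex.I^2 = -1 := Complex.I_sq
  have hI3 : Complex.I^3 = -Complex.I := by rw [pow_succ, Complex.I_sq]; ring
  have hI4 : Complex.I^4 = 1 := by rw [show (4:ℕ)=2*2 from rfl, pow_mul, Complex.I_sq]; ring
  have hω4 : ∀ l, ω l ^ 4 = -c/A := by
    intro l
    simp only [hωdef]
    rw [mul_pow, ← pow_mul, mul_comm (l:ℕ) 4, pow_mul, hI4, one_pow, mul_one, hω₀]
  have hωvals : ω 0 = ω₀ ∧ ω 1 = ω₀*Complex.I ∧ ω 2 = -ω₀ ∧ ω 3 = -(ω₀*Complex.I) := by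
    refine ⟨?_, ?_, ?_, ?_⟩ <;>
      norm_num [hωdef, hI2, hI3, show ((0:Fin 4):ℕ)=0 from rfl, show ((1:Fin 4):ℕ)=1 from rfl,
        show ((2:Fin 4):ℕ)=2 from rfl, show ((3:Fin 4):ℕ)=3 from rfl]
  have hωprod : ∀ z : ℂ, z^4 + c/A = ∏ l, (z - ω l) := by
    intro z
    rw [Fin.prod_univ_four, hωvals.1, hωvals.2.1, hωvals.2.2.1, hωvals.2.2.2]
    linear_combination ((z^2 - ω₀^2) * ω₀^2) * hI2 + hω₀
  have hinj : Function.Injective ω := by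
    intro a b hab
    simp only [hωdef] at hab
    have h := mul_left_cancel₀ hω₀n hab
    fin_cases a <;> fin_cases b <;> first
      | rfl
      | (exfalso; norm_num [hI2, hI3, pow_succ, Complex.ext_iff] at h)
  set d : ℝ := ‖ω₀‖ with hddef
  have hd0 : 0 < d := norm_pos_iff.mpr hω₀n
  have hsep : ∀ a b : Fin 4, a ≠ b → d ≤ ‖ω a - ω b‖ := by
    intro a b hne
    have hfact : ω a - ω b = ω₀ * (Complex.I^(a:ℕ) - Complex.I^(b:ℕ)) := by
      simp only [hωdef]; ring
    rw [hfact, norm_mul]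
    have h1 : 1 ≤ ‖Complex.I^(a:ℕ) - Complex.I^(b:ℕ)‖ := by
      fin_cases a <;> fin_cases b <;>
        first
          | exact absurd rfl hne
          | (apply one_le_norm_of_normSq; simp [pow_succ, Complex.normSq_apply]; try norm_num)
    calc ‖ω₀‖ = ‖ω₀‖ * 1 := by ring
    _ ≤ ‖ω₀‖ * ‖Complex.I^(a:ℕ) - Complex.I^(b:ℕ)‖ := by gcongr
  -- rpow facts
  have hδpos : ∀ ε:ℝ, 0 < ε → 0 < ε^((1:ℝ)/4) := fun ε h => Real.rpow_pos_of_pos h _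
  have hδ4 : ∀ ε:ℝ, 0 < ε → (ε^((1:ℝ)/4))^(4:ℕ) = ε := by
    intro ε h
    rw [← Real.rpow_natCast (ε^((1:ℝ)/4)) 4, ← Real.rpow_mul h.le]
    norm_num
  have hδlt : ∀ ε t:ℝ, 0 < ε → 0 < t → ε < t^(4:ℕ) → ε^((1:ℝ)/4) < t := by
    intro ε t hε ht h
    have h2 := Real.rpow_lt_rpow hε.le h (by norm_num : (0:ℝ) < 1/4)
    rwa [← Real.rpow_natCast t 4, ← Real.rpow_mul ht.le,
      (by norm_num : ((4:ℕ):ℝ)*(1/4) = 1), Real.rpow_one] at h2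
  -- the key localization
  have hkey := keyloc A c q₀ q₁ q₂ q₃ hA ω hωprod hω4 d hd0 hsep
  obtain ⟨δ₀, hδ₀pos, hδ₀le1, hkey₀⟩ := hkey (d/4) (by positivity) le_rfl
  set ε₀ : ℝ := δ₀^(4:ℕ) with hε₀def
  have hε₀pos : 0 < ε₀ := by positivity
  -- the choice of enumerated roots for each ε
  have H : ∀ ε : ℝ, 0 < ε → ε < ε₀ → ∃ Y : Fin 4 → ℂ,
      (∀ z : ℂ, z^4 + (((ε^((1:ℝ)/4):ℝ):ℂ)*q₃/A)*z^3 + (((ε^((1:ℝ)/4):ℝ):ℂ)^2*q₂/A)*z^2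
          + (((ε^((1:ℝ)/4):ℝ):ℂ)^3*q₁/A)*z + ((((ε^((1:ℝ)/4):ℝ):ℂ)^4*q₀+c)/A)
          = ∏ i, (z - Y i)) ∧
      (∀ i l, ‖Y i - ω l‖ < d/4 → i = l) ∧ (∀ l, ‖Y l - ω l‖ < d/4) := by
    intro ε h0 h1
    set δ : ℝ := ε^((1:ℝ)/4) with hδdef
    have hδp : 0 < δ := hδpos ε h0
    have hδδ₀ : δ < δ₀ := hδlt ε δ₀ h0 hδ₀pos h1
    obtain ⟨y, hy⟩ := quartic_factor ((δ:ℂ)*q₃/A) ((δ:ℂ)^2*q₂/A) ((δ:ℂ)^3*q₁/A) (((δ:ℂ)^4*q₀+c)/A)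
    have hclaims := hkey₀ δ hδp hδδ₀ y hy
    obtain ⟨σ, hσ1, hσ2⟩ := selectperm ω d hd0 hsep y hclaims.1 hclaims.2
    refine ⟨fun i => y (σ i), ?_, ?_, hσ1⟩
    · intro z
      rw [hy z]
      exact (Equiv.prod_comp σ (fun i => z - y i)).symm
    · intro i l h
      have := hσ2 (σ i) l h
      exact σ.injective this
  classical
  set Yf : ℝ → Fin 4 → ℂ := fun ε =>
    if h : 0 < ε ∧ ε < ε₀ then (H ε h.1 h.2).choose else fun _ => 0 with hYfdef
  refine ⟨ε₀, hε₀pos, fun l ε => Yf ε l / ((ε^((1:ℝ)/4):ℝ):ℂ), ?_, ω, hinj, hω4, ?_⟩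
  · -- factorization
    intro ε h0 h1 z
    show A * z ^ 4 + q₃ * z ^ 3 + q₂ * z ^ 2 + q₁ * z + q₀ + c * (ε : ℂ)⁻¹
        = A * ∏ i : Fin 4, (z - Yf ε i / ((ε^((1:ℝ)/4):ℝ):ℂ))
    have hYf : Yf ε = (H ε h0 h1).choose := by rw [hYfdef]; exact dif_pos ⟨h0, h1⟩
    obtain ⟨hfac, huniq, hnear⟩ := (H ε h0 h1).choose_spec
    set δ : ℝ := ε^((1:ℝ)/4) with hδdef
    have hδp : 0 < δ := hδpos ε h0
    have hδc : ((δ:ℝ):ℂ) ≠ 0 := by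
      simpa using ne_of_gt hδp
    have hεc : (ε:ℂ) = ((δ:ℝ):ℂ)^4 := by
      rw [← hδ4 ε h0]
      push_cast
      rfl
    set Y := (H ε h0 h1).choose with hYdef
    have hfac2 : ∀ w : ℂ, A*w^4 + (δ:ℂ)*q₃*w^3 + (δ:ℂ)^2*q₂*w^2 + (δ:ℂ)^3*q₁*w
        + ((δ:ℂ)^4*q₀+c) = A * ∏ i, (w - Y i) := by
      intro w
      have h := hfac w
      rw [Fin.prod_univ_four] at h ⊢
      field_simp at h
      linear_combination h
    have h3 := hfac2 (((δ:ℝ):ℂ)*z)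
    rw [Fin.prod_univ_four] at h3 ⊢
    have hZ : ∀ i, ((δ:ℝ):ℂ) * (z - Yf ε i/((δ:ℝ):ℂ)) = ((δ:ℝ):ℂ)*z - Y i := by
      intro i; rw [hYf]; field_simp
    apply mul_left_cancel₀ (pow_ne_zero 4 hδc)
    calc ((δ:ℝ):ℂ)^4 * (A*z^4+q₃*z^3+q₂*z^2+q₁*z+q₀+c*(ε:ℂ)⁻¹)
        = A*(((δ:ℝ):ℂ)*z)^4 + ((δ:ℝ):ℂ)*q₃*(((δ:ℝ):ℂ)*z)^3 + ((δ:ℝ):ℂ)^2*q₂*(((δ:ℝ):ℂ)*z)^2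
          + ((δ:ℝ):ℂ)^3*q₁*(((δ:ℝ):ℂ)*z) + (((δ:ℝ):ℂ)^4*q₀+c) := by
          rw [hεc]
          field_simp
          ring
    _ = A*((((δ:ℝ):ℂ)*z - Y 0)*(((δ:ℝ):ℂ)*z - Y 1)*(((δ:ℝ):ℂ)*z - Y 2)*(((δ:ℝ):ℂ)*z - Y 3)) := h3
    _ = A*((((δ:ℝ):ℂ) * (z - Yf ε 0/((δ:ℝ):ℂ)))*(((δ:ℝ):ℂ) * (z - Yf ε 1/((δ:ℝ):ℂ)))
          *(((δ:ℝ):ℂ) * (z - Yf ε 2/((δ:ℝ):ℂ)))*(((δ:ℝ):ℂ) * (z - Yf ε 3/((δ:ℝ):ℂ)))) := by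
          rw [hZ 0, hZ 1, hZ 2, hZ 3]
    _ = ((δ:ℝ):ℂ)^4 * (A*((z - Yf ε 0/((δ:ℝ):ℂ))*(z - Yf ε 1/((δ:ℝ):ℂ))
          *(z - Yf ε 2/((δ:ℝ):ℂ))*(z - Yf ε 3/((δ:ℝ):ℂ)))) := by ring
  · -- convergence
    intro l
    rw [Metric.tendsto_nhds]
    intro r hr
    set r' : ℝ := min (d/4) (r/2) with hr'def
    have hr'pos : 0 < r' := lt_min (by positivity) (by positivity)
    obtain ⟨δ₁, hδ₁pos, hδ₁le1, hkey₁⟩ := hkey r' hr'pos (min_le_left _ _)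
    set ε₁ : ℝ := min ε₀ (δ₁^(4:ℕ)) with hε₁def
    have hε₁pos : 0 < ε₁ := lt_min hε₀pos (by positivity)
    filter_upwards [Ioo_mem_nhdsGT_of_mem (Set.mem_Ico.mpr ⟨le_refl (0:ℝ), hε₁pos⟩)] with ε hε
    obtain ⟨h0, hεlt⟩ := hε
    have h1 : ε < ε₀ := lt_of_lt_of_le hεlt (min_le_left _ _)
    have hYf : Yf ε = (H ε h0 h1).choose := by rw [hYfdef]; exact dif_pos ⟨h0, h1⟩
    obtain ⟨hfac, huniq, hnear⟩ := (H ε h0 h1).choose_spec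
    set δ : ℝ := ε^((1:ℝ)/4) with hδdef
    have hδp : 0 < δ := hδpos ε h0
    have hδδ₁ : δ < δ₁ := hδlt ε δ₁ h0 hδ₁pos (lt_of_lt_of_le hεlt (min_le_right _ _))
    set Y := (H ε h0 h1).choose with hYdef
    have hclaims := hkey₁ δ hδp hδδ₁ Y hfac
    obtain ⟨i, hi⟩ := hclaims.2 l
    have hil : i = l := huniq i l (lt_of_lt_of_le hi (min_le_left _ _))
    subst hil
    have hδc : ((δ:ℝ):ℂ) ≠ 0 := by simpa using ne_of_gt hδp
    have hsimp : ((δ:ℝ):ℂ) * (Yf ε i / ((δ:ℝ):ℂ)) = Y i := by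
      rw [hYf]
      field_simp
    rw [hsimp, dist_eq_norm]
    calc ‖Y i - ω i‖ < r' := hi
    _ ≤ r/2 := min_le_right _ _
    _ < r := by linarith
end
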